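/- arXiv:2511.21571 — 5 statements merged into one kernel-verified Lean document; each statement's English description precedes it below -/
import Mathlib

section
/- For every d ∈ ℕ there exists a family of graphs (R(m,d))_{m∈ℕ}, where R(m,d) has vertex set {0,1}^d × [m], such that for every ε > 0 there exists m₀ with the following for all m ≥ m₀: (i) for every ℓ ∈ [d], (1−ε)·2^(d−1)·m² ≤ e_ℓ(R(m,d)) ≤ (1+ε)·2^(d−1)·m², and consequently (1−ε)·d·2^(d−1)·m² ≤ e(R(m,d)) ≤ (1+ε)·d·2^(d−1)·m²; and (ii) for all distinct x, y ∈ {0,1}^d and all P ⊆ B_x, Q ⊆ B_y with |P|, |Q| ≥ m^(2/3), the number of edges of R(m,d) between P and Q is at most (1+ε)·2^(−d+δ(x,y))·|P|·|Q|. -/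
open scoped Classical

/-- `G` contains an ordered copy of `F`: a strictly order-preserving map
sending edges to edges. -/
def ContainsOrderedCopy {α β : Type*} [Preorder α] [Preorder β]
    (F : SimpleGraph α) (G : SimpleGraph β) : Prop :=
  ∃ φ : α → β, StrictMono φ ∧ ∀ u v, F.Adj u v → G.Adj (φ u) (φ v)

/-- The number of edges of a simple graph. -/
noncomputable def edgeCount {α : Type*} (G : SimpleGraph α) : ℕ := G.edgeSet.ncard

/-- `ρ_<(F, G)`: the largest edge-density of an `F`-free (ordered) subgraph of `G`. -/
noncomputable def relTuranDensityIn {α β : Type*} [Preorder α] [Preorder β]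
    (F : SimpleGraph α) (G : SimpleGraph β) : ℝ :=
  sSup {r : ℝ | ∃ G' : G.Subgraph, ¬ ContainsOrderedCopy F G'.coe ∧
    r = (edgeCount G'.coe : ℝ) / (edgeCount G : ℝ)}

/-- `ρ_<(F)`: the relative Turán density of an ordered graph `F`, the infimum of
`ρ_<(F, G)` over all finite ordered graphs `G` with at least one edge. -/
noncomputable def relTuranDensity {α : Type*} [Preorder α] (F : SimpleGraph α) : ℝ :=
  sInf {r : ℝ | ∃ (n : ℕ) (G : SimpleGraph (Fin n)),
    1 ≤ edgeCount G ∧ r = relTuranDensityIn F G}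

/-- The cube `{0,1}^d`, ordered lexicographically (index `0` most significant). -/
abbrev Cube (d : ℕ) := Lex (Fin d → Bool)

noncomputable instance (priority := 2000) (d : ℕ) : LinearOrder (Cube d) :=
  haveI : WellFoundedLT (Fin d) := inferInstance
  inferInstance

instance instFintypeLexSelf {α : Type*} [Fintype α] : Fintype (Lex α) := ‹Fintype α›

/-- `δ(x, y) = ℓ`, with positions `1`-indexed: the least (1-indexed) coordinate at which
`x` and `y` differ is `ℓ`. -/
def atLevel {d : ℕ} (ℓ : ℕ) (x y : Cube d) : Prop :=
  ∃ i : Fin d, (i : ℕ) + 1 = ℓ ∧ ofLex x i ≠ ofLex y i ∧ ∀ j < i, ofLex x j = ofLex y j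

/-- `e_ℓ(G)`: the number of level-`ℓ` edges of a graph `G` on `{0,1}^d`. -/
noncomputable def levelCount {d : ℕ} (G : SimpleGraph (Cube d)) (ℓ : ℕ) : ℕ :=
  {p : Cube d × Cube d | p.1 < p.2 ∧ G.Adj p.1 p.2 ∧ atLevel ℓ p.1 p.2}.ncard

/-- `τ_{ℓ,d} = 2 ^ (2d - ℓ - 1)`. -/
def tau (d ℓ : ℕ) : ℕ := 2 ^ (2 * d - ℓ - 1)

/-- The level `ℓ` is `α`-rich with respect to `G`, i.e. `e_ℓ(G) ≥ α · τ_{ℓ,d}`. -/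
def IsRichLevel {d : ℕ} (G : SimpleGraph (Cube d)) (α : ℝ) (ℓ : ℕ) : Prop :=
  α * (tau d ℓ : ℝ) ≤ (levelCount G ℓ : ℝ)

/-- `G` is `(α, C)`-rich: at least `C` levels `ℓ ∈ [d]` are `α`-rich. -/
def IsRichGraph {d : ℕ} (G : SimpleGraph (Cube d)) (α C : ℝ) : Prop :=
  C ≤ ({ℓ : ℕ | ℓ ∈ Finset.Icc 1 d ∧ IsRichLevel G α ℓ}.ncard : ℝ)

/-- The vertex set `{0,1}^d × [m]`, ordered lexicographically. -/
abbrev BlockVert (d m : ℕ) := Lex (Cube d × Fin m)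

/-- `e_ℓ(R)` for a graph `R` on `{0,1}^d × [m]`: the number of edges whose endpoints lie in
blocks `B_x`, `B_y` with `δ(x,y) = ℓ`. -/
noncomputable def levelCountB {d m : ℕ} (R : SimpleGraph (BlockVert d m)) (ℓ : ℕ) : ℕ :=
  {p : BlockVert d m × BlockVert d m |
    p.1 < p.2 ∧ R.Adj p.1 p.2 ∧ atLevel ℓ (ofLex p.1).1 (ofLex p.2).1}.ncard

/-- Property (i) with accuracy `ε`: every level `ℓ ∈ [d]` has
`(1−ε)·2^(d−1)·m² ≤ e_ℓ(R) ≤ (1+ε)·2^(d−1)·m²`. -/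
def PropI {d m : ℕ} (R : SimpleGraph (BlockVert d m)) (ε : ℝ) : Prop :=
  ∀ ℓ ∈ Finset.Icc 1 d,
    (1 - ε) * 2 ^ (d - 1) * (m : ℝ) ^ 2 ≤ (levelCountB R ℓ : ℝ) ∧
    (levelCountB R ℓ : ℝ) ≤ (1 + ε) * 2 ^ (d - 1) * (m : ℝ) ^ 2

/-- Property (ii) with accuracy `ε`: for all distinct `x, y ∈ {0,1}^d` (say `δ(x,y) = ℓ`) and
all `P ⊆ B_x`, `Q ⊆ B_y` of size at least `m^(2/3)`, the number of edges of `R` between `P`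
and `Q` is at most `(1+ε)·2^(−d+ℓ)·|P|·|Q|`. -/
def PropII {d m : ℕ} (R : SimpleGraph (BlockVert d m)) (ε : ℝ) : Prop :=
  ∀ (x y : Cube d) (ℓ : ℕ), atLevel ℓ x y →
    ∀ P Q : Finset (Fin m),
      (m : ℝ) ^ ((2 : ℝ)/3) ≤ (P.card : ℝ) → (m : ℝ) ^ ((2 : ℝ)/3) ≤ (Q.card : ℝ) →
      ({pq : Fin m × Fin m | pq.1 ∈ P ∧ pq.2 ∈ Q ∧
          R.Adj (toLex (x, pq.1)) (toLex (y, pq.2))}.ncard : ℝ) ≤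
        (1 + ε) * 2 ^ ((ℓ : ℤ) - (d : ℤ)) * (P.card : ℝ) * (Q.card : ℝ)

/-- `F` contains a monotone path of length two: vertices `u < v < w` with
`uv, vw ∈ E(F)`. -/
def HasMonotonePathTwo {α : Type*} [Preorder α] (F : SimpleGraph α) : Prop :=
  ∃ u v w, u < v ∧ v < w ∧ F.Adj u v ∧ F.Adj v w

/-- The ordered graph `H_k` on `[k] × {0,1}` (ordered lexicographically), with edges
`(x,0)(y,1)` for `x ≤ y`. -/
def Hgraph (k : ℕ) : SimpleGraph (Lex (Fin k × Bool)) :=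
  SimpleGraph.fromRel (fun a b =>
    (ofLex a).2 = false ∧ (ofLex b).2 = true ∧ (ofLex a).1 ≤ (ofLex b).1)


noncomputable section
namespace S4

/-- dimension of the field -/
def tlen (d m : ℕ) : ℕ := d + Nat.log 2 m + 1

abbrev Fq (d m : ℕ) := GaloisField 2 (tlen d m)

instance (d m : ℕ) : Fintype (Fq d m) := Fintype.ofFinite _

lemma card_Fq (d m : ℕ) : Fintype.card (Fq d m) = 2 ^ tlen d m := by
  have := GaloisField.card 2 (tlen d m) (by simp [tlen])
  rwa [Nat.card_eq_fintype_card] at this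

lemma le_card_Fq (d m : ℕ) : m ≤ Fintype.card (Fq d m) := by
  rw [card_Fq]
  calc m ≤ 2 ^ (Nat.log 2 m + 1) := by
        rcases Nat.eq_zero_or_pos m with h | h
        · simp [h]
        · exact (Nat.lt_pow_succ_log_self (by norm_num) m).le
    _ ≤ 2 ^ tlen d m := Nat.pow_le_pow_right (by norm_num) (by unfold tlen; omega)

lemma card_Fq_le (d m : ℕ) (hm : 1 ≤ m) : Fintype.card (Fq d m) ≤ 2 ^ (d + 1) * m := by
  rw [card_Fq, tlen, show d + Nat.log 2 m + 1 = (d+1) + Nat.log 2 m by ring, pow_add]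
  exact Nat.mul_le_mul_left _ (Nat.pow_log_le_self 2 (by omega))

def emb (d m : ℕ) : Fin m ↪ Fq d m :=
  (Function.Embedding.nonempty_of_card_le (by simpa using le_card_Fq d m)).some

def bas (d m : ℕ) : Module.Basis (Fin (tlen d m)) (ZMod 2) (Fq d m) :=
  (Module.finBasis _ _).reindex (finCongr (GaloisField.finrank 2 (by simp [tlen])))

def Lf (d m k : ℕ) (z : Fq d m) : Fin k → ZMod 2 :=
  fun i => (bas d m).repr z ⟨(i : ℕ) % tlen d m, Nat.mod_lt _ (by simp [tlen])⟩

lemma Lf_add (d m k : ℕ) (z w : Fq d m) : Lf d m k (z + w) = Lf d m k z + Lf d m k w := by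
  funext i; simp [Lf]

def chi (a : ZMod 2) : ℝ := if a = 0 then 1 else -1

lemma chi_add (a b : ZMod 2) : chi (a + b) = chi a * chi b := by
  have h : ∀ a : ZMod 2, a = 0 ∨ a = 1 := by decide
  rcases h a with ha | ha <;> rcases h b with hb | hb <;>
    subst ha <;> subst hb <;> simp [chi] <;> decide

lemma chi_zero : chi 0 = 1 := by simp [chi]

lemma abs_chi (a : ZMod 2) : |chi a| = 1 := by
  unfold chi; split <;> simp

lemma sum_chi_hom {G : Type*} [AddCommGroup G] [Fintype G] (f : G →+ ZMod 2)
    (hf : ∃ g, f g ≠ 0) : ∑ g : G, chi (f g) = 0 := by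
  obtain ⟨g₀, hg₀⟩ := hf
  have hg1 : chi (f g₀) = -1 := by
    unfold chi; rw [if_neg hg₀]
  have key : ∑ g : G, chi (f (g₀ + g)) = ∑ g : G, chi (f g) :=
    Fintype.sum_bijective (fun g => g₀ + g) (AddGroup.addLeft_bijective g₀) _ _ (fun g => rfl)
  have key2 : ∑ g : G, chi (f (g₀ + g)) = -∑ g : G, chi (f g) := by
    rw [← neg_one_mul, ← hg1, Finset.mul_sum]
    exact Finset.sum_congr rfl fun g _ => by rw [map_add, chi_add]
  linarith [key.symm.trans key2]

lemma orth {k : ℕ} (w : Fin k → ZMod 2) :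
    ∑ c : Fin k → ZMod 2, chi (∑ i, c i * w i) = if w = 0 then (2:ℝ)^k else 0 := by
  split_ifs with h
  · subst h
    simp [chi_zero, Finset.card_univ]
  · obtain ⟨i, hi⟩ := Function.ne_iff.mp h
    refine sum_chi_hom (G := Fin k → ZMod 2)
      ⟨⟨fun c => ∑ j, c j * w j, by simp⟩, by
        intro a b; simp [add_mul, Finset.sum_add_distrib]⟩ ⟨Pi.single i 1, ?_⟩
    simp only [AddMonoidHom.coe_mk, ZeroHom.coe_mk]
    rw [Finset.sum_eq_single i]
    · simpa using hi
    · intro j _ hj; simp [Pi.single_apply, hj]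
    · simp

def gc (d m k : ℕ) (c : Fin k → ZMod 2) (z : Fq d m) : ZMod 2 := ∑ i, c i * Lf d m k z i

lemma gc_add (d m k : ℕ) (c : Fin k → ZMod 2) (z w : Fq d m) :
    gc d m k c (z + w) = gc d m k c z + gc d m k c w := by
  simp [gc, Lf_add, mul_add, Finset.sum_add_distrib]

lemma gc_zero (d m k : ℕ) (c : Fin k → ZMod 2) : gc d m k c 0 = 0 := by
  simp [gc, Lf]

lemma exists_gc_ne (d m k : ℕ) (hk : k ≤ tlen d m) {c : Fin k → ZMod 2} (hc : c ≠ 0) :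
    ∃ z, gc d m k c z ≠ 0 := by
  obtain ⟨i, hi⟩ := Function.ne_iff.mp hc
  refine ⟨bas d m ⟨(i : ℕ), lt_of_lt_of_le i.2 hk⟩, ?_⟩
  have hrepr : ∀ j : Fin k, Lf d m k (bas d m ⟨(i : ℕ), lt_of_lt_of_le i.2 hk⟩) j
      = if j = i then 1 else 0 := by
    intro j
    have hj : (j : ℕ) % tlen d m = (j : ℕ) := Nat.mod_eq_of_lt (lt_of_lt_of_le j.2 hk)
    simp only [Lf, Module.Basis.repr_self]
    rw [Finsupp.single_apply]
    by_cases h : j = i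
    · subst h; simp [hj]
    · rw [if_neg, if_neg h]
      simp only [Fin.mk.injEq, hj]
      exact fun hh => h (Fin.ext hh.symm)
  rw [gc, Finset.sum_eq_single i]
  · rw [hrepr i, if_pos rfl, mul_one]; simpa using hi
  · intro j _ hj; rw [hrepr j, if_neg hj, mul_zero]
  · simp

lemma indicator_eq (d m k : ℕ) (z : Fq d m) :
    (if Lf d m k z = 0 then (1:ℝ) else 0)
      = ((2:ℝ)^k)⁻¹ * ∑ c : Fin k → ZMod 2, chi (gc d m k c z) := by
  have := orth (Lf d m k z)
  simp only [gc]
  rw [this]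
  split_ifs <;> simp

lemma lindsey (d m k : ℕ) {c : Fin k → ZMod 2} (hgc : ∃ z, gc d m k c z ≠ 0)
    (P Q : Finset (Fin m)) :
    |∑ p ∈ P, ∑ q ∈ Q, chi (gc d m k c (emb d m p * emb d m q))|
      ≤ Real.sqrt ((Fintype.card (Fq d m) : ℝ) * P.card * Q.card) := by
  set A : Fq d m → ℝ := fun z => ∑ q ∈ Q, chi (gc d m k c (z * emb d m q)) with hA
  have h1 : (∑ p ∈ P, ∑ q ∈ Q, chi (gc d m k c (emb d m p * emb d m q)))^2
      ≤ (P.card : ℝ) * ∑ p ∈ P, (A (emb d m p))^2 := by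
    have := Finset.sum_mul_sq_le_sq_mul_sq P (fun _ => (1:ℝ)) (fun p => A (emb d m p))
    simpa [hA] using this
  have h2 : ∑ p ∈ P, (A (emb d m p))^2 ≤ ∑ z : Fq d m, (A z)^2 := by
    rw [← Finset.sum_image (f := fun z => (A z)^2)
      (g := emb d m) (by intro a _ b _ h; exact (emb d m).injective h)]
    exact Finset.sum_le_sum_of_subset_of_nonneg (Finset.subset_univ _)
      (fun z _ _ => sq_nonneg _)
  have h3 : ∑ z : Fq d m, (A z)^2 = (Q.card : ℝ) * Fintype.card (Fq d m) := by
    have expand : ∀ z : Fq d m, (A z)^2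
        = ∑ q ∈ Q, ∑ q' ∈ Q, chi (gc d m k c (z * (emb d m q + emb d m q'))) := by
      intro z
      rw [hA, sq, Finset.sum_mul_sum]
      refine Finset.sum_congr rfl fun q _ => Finset.sum_congr rfl fun q' _ => ?_
      rw [← chi_add, ← gc_add, ← mul_add]
    calc ∑ z : Fq d m, (A z)^2
        = ∑ q ∈ Q, ∑ q' ∈ Q, ∑ z : Fq d m, chi (gc d m k c (z * (emb d m q + emb d m q'))) := by
          rw [show ∑ z : Fq d m, (A z)^2 = ∑ z : Fq d m, ∑ q ∈ Q, ∑ q' ∈ Q,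
              chi (gc d m k c (z * (emb d m q + emb d m q'))) from
            Finset.sum_congr rfl fun z _ => expand z]
          rw [Finset.sum_comm]
          exact Finset.sum_congr rfl fun q _ => Finset.sum_comm
      _ = ∑ q ∈ Q, ∑ q' ∈ Q, (if q = q' then (Fintype.card (Fq d m) : ℝ) else 0) := by
          refine Finset.sum_congr rfl fun q hq => Finset.sum_congr rfl fun q' hq' => ?_
          split_ifs with hqq
          · subst hqq
            have : emb d m q + emb d m q = 0 := CharTwo.add_self_eq_zero _
            simp [this, gc_zero, chi_zero, Finset.card_univ]
          · have hw : emb d m q + emb d m q' ≠ 0 := by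
              intro h0
              have : emb d m q = emb d m q' := by
                have := CharTwo.neg_eq (emb d m q')
                rw [← this, ← sub_eq_zero]
                simpa [sub_eq_add_neg, this] using h0
              exact hqq ((emb d m).injective this)
            refine sum_chi_hom (AddMonoidHom.mk' (fun z => gc d m k c (z * (emb d m q + emb d m q')))
              (by intro a b; simp only [add_mul, gc_add])) ?_
            obtain ⟨z₀, hz₀⟩ := hgc
            exact ⟨z₀ * (emb d m q + emb d m q')⁻¹, by
              simpa [mul_assoc, inv_mul_cancel₀ hw] using hz₀⟩
      _ = ∑ _q ∈ Q, (Fintype.card (Fq d m) : ℝ) := by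
          refine Finset.sum_congr rfl fun q hq => ?_
          rw [Finset.sum_ite_eq Q q (fun _ => (Fintype.card (Fq d m) : ℝ)), if_pos hq]
      _ = (Q.card : ℝ) * Fintype.card (Fq d m) := by
          rw [Finset.sum_const, nsmul_eq_mul]
  have hT2 : (∑ p ∈ P, ∑ q ∈ Q, chi (gc d m k c (emb d m p * emb d m q)))^2
      ≤ (Fintype.card (Fq d m) : ℝ) * P.card * Q.card := by
    calc _ ≤ (P.card : ℝ) * ((Q.card : ℝ) * Fintype.card (Fq d m)) := by
          refine h1.trans ?_
          gcongr
          exact h2.trans (le_of_eq h3)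
      _ = (Fintype.card (Fq d m) : ℝ) * P.card * Q.card := by ring
  calc |∑ p ∈ P, ∑ q ∈ Q, chi (gc d m k c (emb d m p * emb d m q))|
      = Real.sqrt ((∑ p ∈ P, ∑ q ∈ Q, chi (gc d m k c (emb d m p * emb d m q)))^2) := by
        rw [Real.sqrt_sq_eq_abs]
    _ ≤ _ := Real.sqrt_le_sqrt hT2

lemma card_filter_eq_sum (d m k : ℕ) (P Q : Finset (Fin m)) :
    ((((P ×ˢ Q).filter (fun pq : Fin m × Fin m =>
        Lf d m k (emb d m pq.1 * emb d m pq.2) = 0)).card : ℝ))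
      = ∑ p ∈ P, ∑ q ∈ Q, (if Lf d m k (emb d m p * emb d m q) = 0 then (1:ℝ) else 0) := by
  rw [← Finset.sum_product (s := P) (t := Q)
    (f := fun pq => if Lf d m k (emb d m pq.1 * emb d m pq.2) = 0 then (1:ℝ) else 0)]
  rw [Finset.sum_boole]

lemma disc (d m k : ℕ) (hk : k ≤ tlen d m) (P Q : Finset (Fin m)) :
    |((((P ×ˢ Q).filter (fun pq : Fin m × Fin m =>
        Lf d m k (emb d m pq.1 * emb d m pq.2) = 0)).card : ℝ))
        - (P.card : ℝ) * Q.card / 2^k|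
      ≤ Real.sqrt ((Fintype.card (Fq d m) : ℝ) * P.card * Q.card) := by
  have key : ((((P ×ˢ Q).filter (fun pq : Fin m × Fin m =>
        Lf d m k (emb d m pq.1 * emb d m pq.2) = 0)).card : ℝ))
      = ((2:ℝ)^k)⁻¹ * ∑ c : Fin k → ZMod 2,
          ∑ p ∈ P, ∑ q ∈ Q, chi (gc d m k c (emb d m p * emb d m q)) := by
    rw [card_filter_eq_sum]
    calc ∑ p ∈ P, ∑ q ∈ Q, (if Lf d m k (emb d m p * emb d m q) = 0 then (1:ℝ) else 0)
        = ∑ p ∈ P, ∑ q ∈ Q, ∑ c : Fin k → ZMod 2,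
            ((2:ℝ)^k)⁻¹ * chi (gc d m k c (emb d m p * emb d m q)) := by
          refine Finset.sum_congr rfl fun p _ => Finset.sum_congr rfl fun q _ => ?_
          rw [indicator_eq, Finset.mul_sum]
      _ = ∑ p ∈ P, ∑ c : Fin k → ZMod 2, ∑ q ∈ Q,
            ((2:ℝ)^k)⁻¹ * chi (gc d m k c (emb d m p * emb d m q)) :=
          Finset.sum_congr rfl fun p _ => Finset.sum_comm
      _ = ∑ c : Fin k → ZMod 2, ∑ p ∈ P, ∑ q ∈ Q,
            ((2:ℝ)^k)⁻¹ * chi (gc d m k c (emb d m p * emb d m q)) :=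
          Finset.sum_comm
      _ = ((2:ℝ)^k)⁻¹ * ∑ c : Fin k → ZMod 2,
            ∑ p ∈ P, ∑ q ∈ Q, chi (gc d m k c (emb d m p * emb d m q)) := by
          rw [Finset.mul_sum]
          refine Finset.sum_congr rfl fun c _ => ?_
          rw [Finset.mul_sum]
          refine Finset.sum_congr rfl fun p _ => ?_
          rw [Finset.mul_sum]
  have hzero : ∑ p ∈ P, ∑ q ∈ Q, chi (gc d m k (0 : Fin k → ZMod 2) (emb d m p * emb d m q))
      = (P.card : ℝ) * Q.card := by
    have h1 : ∀ p q : Fin m, chi (gc d m k (0 : Fin k → ZMod 2) (emb d m p * emb d m q)) = 1 := by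
      intro p q
      have : gc d m k (0 : Fin k → ZMod 2) (emb d m p * emb d m q) = 0 := by simp [gc]
      rw [this, chi_zero]
    simp only [h1, Finset.sum_const, nsmul_eq_mul, mul_one]
  have split : ∑ c : Fin k → ZMod 2,
        ∑ p ∈ P, ∑ q ∈ Q, chi (gc d m k c (emb d m p * emb d m q))
      = (P.card : ℝ) * Q.card + ∑ c ∈ Finset.univ.erase (0 : Fin k → ZMod 2),
          ∑ p ∈ P, ∑ q ∈ Q, chi (gc d m k c (emb d m p * emb d m q)) := by
    rw [← Finset.add_sum_erase Finset.univ
      (fun c => ∑ p ∈ P, ∑ q ∈ Q, chi (gc d m k c (emb d m p * emb d m q)))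
      (Finset.mem_univ (0 : Fin k → ZMod 2)), hzero]
  rw [key, split, mul_add]
  have h2k : ((2:ℝ)^k)⁻¹ * ((P.card : ℝ) * Q.card) = (P.card : ℝ) * Q.card / 2^k := by
    ring
  rw [h2k, add_sub_cancel_left]
  have habs : |((2:ℝ)^k)⁻¹ * ∑ c ∈ Finset.univ.erase (0 : Fin k → ZMod 2),
        ∑ p ∈ P, ∑ q ∈ Q, chi (gc d m k c (emb d m p * emb d m q))|
      ≤ ((2:ℝ)^k)⁻¹ * ∑ c ∈ Finset.univ.erase (0 : Fin k → ZMod 2),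
          Real.sqrt ((Fintype.card (Fq d m) : ℝ) * P.card * Q.card) := by
    rw [abs_mul, abs_of_nonneg (by positivity : (0:ℝ) ≤ ((2:ℝ)^k)⁻¹)]
    refine mul_le_mul_of_nonneg_left ?_ (by positivity)
    refine (Finset.abs_sum_le_sum_abs _ _).trans ?_
    refine Finset.sum_le_sum fun c hc => ?_
    exact lindsey d m k (exists_gc_ne d m k hk (Finset.ne_of_mem_erase hc)) P Q
  refine habs.trans ?_
  rw [Finset.sum_const, nsmul_eq_mul]
  have hcard : ((Finset.univ.erase (0 : Fin k → ZMod 2)).card : ℝ) ≤ 2^k := by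
    have : (Finset.univ.erase (0 : Fin k → ZMod 2)).card ≤ Fintype.card (Fin k → ZMod 2) := by
      rw [← Finset.card_univ]; exact Finset.card_le_card (Finset.erase_subset _ _)
    calc ((Finset.univ.erase (0 : Fin k → ZMod 2)).card : ℝ)
        ≤ (Fintype.card (Fin k → ZMod 2) : ℝ) := by exact_mod_cast this
      _ = 2^k := by simp [Fintype.card_fun]
  calc ((2:ℝ)^k)⁻¹ * (((Finset.univ.erase (0 : Fin k → ZMod 2)).card : ℝ)
          * Real.sqrt ((Fintype.card (Fq d m) : ℝ) * P.card * Q.card))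
      ≤ ((2:ℝ)^k)⁻¹ * ((2:ℝ)^k * Real.sqrt ((Fintype.card (Fq d m) : ℝ) * P.card * Q.card)) := by
        gcongr
    _ = Real.sqrt ((Fintype.card (Fq d m) : ℝ) * P.card * Q.card) := by
        field_simp


/-! ### Levels -/

lemma atLevel_ne {d : ℕ} {ℓ : ℕ} {x y : Cube d} (h : atLevel ℓ x y) : x ≠ y := by
  obtain ⟨i, _, hne, _⟩ := h
  intro hxy
  exact hne (by rw [hxy])

lemma atLevel_comm {d : ℕ} {ℓ : ℕ} {x y : Cube d} (h : atLevel ℓ x y) : atLevel ℓ y x := by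
  obtain ⟨i, h1, h2, h3⟩ := h
  exact ⟨i, h1, h2.symm, fun j hj => (h3 j hj).symm⟩

lemma atLevel_unique {d : ℕ} {ℓ ℓ' : ℕ} {x y : Cube d} (h : atLevel ℓ x y)
    (h' : atLevel ℓ' x y) : ℓ = ℓ' := by
  obtain ⟨i, h1, h2, h3⟩ := h
  obtain ⟨i', h1', h2', h3'⟩ := h'
  rcases lt_trichotomy i i' with hlt | heq | hgt
  · exact absurd (h3' i hlt) h2
  · subst heq; omega
  · exact absurd (h3 i' hgt) h2'

lemma atLevel_mem {d : ℕ} {ℓ : ℕ} {x y : Cube d} (h : atLevel ℓ x y) :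
    ℓ ∈ Finset.Icc 1 d := by
  obtain ⟨i, h1, _, _⟩ := h
  have := i.2
  simp only [Finset.mem_Icc]
  omega

/-- the level of a pair of distinct cube points -/
def lev {d : ℕ} (x y : Cube d) : ℕ :=
  if h : (Finset.univ.filter (fun i : Fin d => ofLex x i ≠ ofLex y i)).Nonempty
  then ((Finset.univ.filter (fun i : Fin d => ofLex x i ≠ ofLex y i)).min' h : ℕ) + 1
  else 0

lemma lev_comm {d : ℕ} (x y : Cube d) : lev x y = lev y x := by
  have hs : (Finset.univ.filter (fun i : Fin d => ofLex x i ≠ ofLex y i))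
      = (Finset.univ.filter (fun i : Fin d => ofLex y i ≠ ofLex x i)) := by
    ext i; rw [Finset.mem_filter, Finset.mem_filter]; exact ⟨fun h => ⟨h.1, Ne.symm h.2⟩, fun h => ⟨h.1, Ne.symm h.2⟩⟩
  unfold lev
  rw [hs]

lemma atLevel_lev {d : ℕ} {x y : Cube d} (h : x ≠ y) : atLevel (lev x y) x y := by
  have hex : ∃ i : Fin d, ofLex x i ≠ ofLex y i := by
    by_contra hno
    push_neg at hno
    exact h (by
      have : ofLex x = ofLex y := funext hno
      simpa using congrArg toLex this)
  have hne : (Finset.univ.filter (fun i : Fin d => ofLex x i ≠ ofLex y i)).Nonempty := by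
    obtain ⟨i, hi⟩ := hex
    exact ⟨i, Finset.mem_filter.mpr ⟨Finset.mem_univ _, hi⟩⟩
  refine ⟨(Finset.univ.filter (fun i : Fin d => ofLex x i ≠ ofLex y i)).min' hne, ?_, ?_, ?_⟩
  · unfold lev; rw [dif_pos hne]
  · exact (Finset.mem_filter.mp (Finset.min'_mem _ hne)).2
  · intro j hj
    by_contra hjne
    exact absurd (Finset.min'_le _ j (Finset.mem_filter.mpr ⟨Finset.mem_univ _, hjne⟩))
      (not_le.mpr hj)

lemma lev_eq {d : ℕ} {ℓ : ℕ} {x y : Cube d} (h : atLevel ℓ x y) : lev x y = ℓ :=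
  atLevel_unique (atLevel_lev (atLevel_ne h)) h

/-! ### The graph -/

/-- The quasirandom blow-up graph. -/
def RG (d m : ℕ) : SimpleGraph (BlockVert d m) where
  Adj u v := (ofLex u).1 ≠ (ofLex v).1 ∧
    Lf d m (d - lev (ofLex u).1 (ofLex v).1) (emb d m (ofLex u).2 * emb d m (ofLex v).2) = 0
  symm := by
    constructor; rintro u v ⟨h1, h2⟩
    refine ⟨h1.symm, ?_⟩
    rwa [lev_comm, mul_comm]
  loopless := by constructor; rintro u ⟨h1, _⟩; exact h1 rfl

lemma RG_adj {d m : ℕ} (u v : BlockVert d m) :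
    (RG d m).Adj u v ↔ (ofLex u).1 ≠ (ofLex v).1 ∧
      Lf d m (d - lev (ofLex u).1 (ofLex v).1)
        (emb d m (ofLex u).2 * emb d m (ofLex v).2) = 0 := Iff.rfl

/-! ### Counting pairs at a given level -/

lemma cardA (d j : ℕ) (hj : j ≤ d) :
    (Finset.univ.filter (fun xy : Cube d × Cube d =>
      ∀ i : Fin d, (i : ℕ) < j → ofLex xy.1 i = ofLex xy.2 i)).card = 2^d * 2^(d-j) := by
  have := Finset.card_bij'
    (i := fun (xy : Cube d × Cube d)
      (_ : xy ∈ Finset.univ.filter (fun xy : Cube d × Cube d =>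
        ∀ i : Fin d, (i : ℕ) < j → ofLex xy.1 i = ofLex xy.2 i)) =>
      ((ofLex xy.1, fun i : Fin (d - j) => ofLex xy.2 ⟨j + (i : ℕ), by omega⟩) :
        (Fin d → Bool) × (Fin (d - j) → Bool)))
    (j := fun (xz : (Fin d → Bool) × (Fin (d - j) → Bool)) (_ : xz ∈ Finset.univ) =>
      ((toLex xz.1, toLex (fun i : Fin d =>
        if h : (i : ℕ) < j then xz.1 i else xz.2 ⟨(i : ℕ) - j, by omega⟩)) :
        Cube d × Cube d))
    (fun _ _ => Finset.mem_univ _)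
    ?_ ?_ ?_
  · rw [this, Finset.card_univ, Fintype.card_prod, Fintype.card_fun, Fintype.card_fun]
    simp
  · intro xz _
    refine Finset.mem_filter.mpr ⟨Finset.mem_univ _, ?_⟩
    intro i hi
    simp only [ofLex_toLex]
    rw [dif_pos hi]
  · intro xy hxy
    have hmem := (Finset.mem_filter.mp hxy).2
    refine Prod.ext ?_ ?_
    · simp
    · show toLex (fun i : Fin d => if h : (i : ℕ) < j then ofLex xy.1 i else _) = xy.2
      have : (fun i : Fin d => if h : (i : ℕ) < j then ofLex xy.1 i
          else ofLex xy.2 ⟨j + ((i : ℕ) - j), by omega⟩) = ofLex xy.2 := by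
        funext i
        split_ifs with h
        · exact hmem i h
        · apply congrArg
          apply Fin.ext
          simp only [Fin.val_mk]
          omega
      rw [this]
      simp
  · intro xz _
    refine Prod.ext ?_ ?_
    · simp
    · funext i
      show (ofLex (toLex (fun i : Fin d => if h : (i : ℕ) < j then xz.1 i else _)))
        ⟨j + (i : ℕ), _⟩ = xz.2 i
      rw [ofLex_toLex]
      have hnot : ¬ (j + (i : ℕ) < j) := by omega
      rw [dif_neg hnot]
      apply congrArg
      apply Fin.ext
      simp only [Fin.val_mk]
      omega

lemma cardD (d : ℕ) (i : Fin d) :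
    (Finset.univ.filter (fun xy : Cube d × Cube d =>
      atLevel ((i : ℕ) + 1) xy.1 xy.2)).card = 2^(2*d - ((i : ℕ) + 1)) := by
  have hsplit : (Finset.univ.filter (fun xy : Cube d × Cube d =>
        ∀ i' : Fin d, (i' : ℕ) < (i : ℕ) → ofLex xy.1 i' = ofLex xy.2 i'))
      = (Finset.univ.filter (fun xy : Cube d × Cube d =>
          ∀ i' : Fin d, (i' : ℕ) < (i : ℕ) + 1 → ofLex xy.1 i' = ofLex xy.2 i'))
        ∪ (Finset.univ.filter (fun xy : Cube d × Cube d =>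
            atLevel ((i : ℕ) + 1) xy.1 xy.2)) := by
    ext xy
    simp only [Finset.mem_union, Finset.mem_filter, Finset.mem_univ, true_and]
    constructor
    · intro hag
      by_cases hdi : ofLex xy.1 i = ofLex xy.2 i
      · left
        intro i' hi'
        by_cases h : (i' : ℕ) < (i : ℕ)
        · exact hag i' h
        · have : i' = i := Fin.ext (by omega)
          rwa [this]
      · right
        exact ⟨i, rfl, hdi, fun j hj => hag j hj⟩
    · rintro (hag | ⟨i', hi'1, _, hag⟩)
      · intro i' hi'; exact hag i' (by omega)
      · intro i'' hi''
        have hii : i' = i := Fin.ext (by omega)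
        subst hii
        exact hag i'' hi''
  have hdisj : Disjoint (Finset.univ.filter (fun xy : Cube d × Cube d =>
        ∀ i' : Fin d, (i' : ℕ) < (i : ℕ) + 1 → ofLex xy.1 i' = ofLex xy.2 i'))
      (Finset.univ.filter (fun xy : Cube d × Cube d =>
        atLevel ((i : ℕ) + 1) xy.1 xy.2)) := by
    rw [Finset.disjoint_left]
    intro xy h1 h2
    have hag := (Finset.mem_filter.mp h1).2
    obtain ⟨i', hi'1, hne, _⟩ := (Finset.mem_filter.mp h2).2
    have hii : i' = i := Fin.ext (by omega)
    subst hii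
    exact hne (hag i' (by omega))
  have hcards := congrArg Finset.card hsplit
  rw [Finset.card_union_of_disjoint hdisj] at hcards
  have hA1 := cardA d (i : ℕ) (by omega)
  have hA2 := cardA d ((i : ℕ) + 1) (by omega)
  rw [hA1, hA2] at hcards
  have hi2 := i.2
  have hexp : 2^d * 2^(d - (i : ℕ)) = 2^d * 2^(d - ((i : ℕ) + 1)) + 2^(2*d - ((i : ℕ) + 1)) := by
    rw [← pow_add, ← pow_add]
    have h1 : d - (i : ℕ) = (d - ((i : ℕ) + 1)) + 1 := by omega
    rw [show d + (d - (i : ℕ)) = (d + (d - ((i : ℕ) + 1))) + 1 by omega]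
    rw [pow_succ, show 2*d - ((i : ℕ) + 1) = d + (d - ((i : ℕ) + 1)) by omega]
    ring
  omega

lemma cardDlt (d : ℕ) (ℓ : ℕ) (hℓ : ℓ ∈ Finset.Icc 1 d) :
    (Finset.univ.filter (fun xy : Cube d × Cube d =>
      xy.1 < xy.2 ∧ atLevel ℓ xy.1 xy.2)).card = 2^(2*d - ℓ - 1) := by
  simp only [Finset.mem_Icc] at hℓ
  set i : Fin d := ⟨ℓ - 1, by omega⟩ with hidef
  have hℓi : (i : ℕ) + 1 = ℓ := by simp [hidef]; omega
  have hsplit : (Finset.univ.filter (fun xy : Cube d × Cube d =>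
        atLevel ℓ xy.1 xy.2))
      = (Finset.univ.filter (fun xy : Cube d × Cube d =>
          xy.1 < xy.2 ∧ atLevel ℓ xy.1 xy.2))
        ∪ (Finset.univ.filter (fun xy : Cube d × Cube d =>
            xy.2 < xy.1 ∧ atLevel ℓ xy.1 xy.2)) := by
    ext xy
    simp only [Finset.mem_union, Finset.mem_filter, Finset.mem_univ, true_and]
    constructor
    · intro h
      rcases lt_or_gt_of_ne (atLevel_ne h) with hlt | hgt
      · exact Or.inl ⟨hlt, h⟩
      · exact Or.inr ⟨hgt, h⟩
    · rintro (⟨_, h⟩ | ⟨_, h⟩) <;> exact h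
  have hdisj : Disjoint (Finset.univ.filter (fun xy : Cube d × Cube d =>
        xy.1 < xy.2 ∧ atLevel ℓ xy.1 xy.2))
      (Finset.univ.filter (fun xy : Cube d × Cube d =>
        xy.2 < xy.1 ∧ atLevel ℓ xy.1 xy.2)) := by
    rw [Finset.disjoint_left]
    intro xy h1 h2
    exact absurd ((Finset.mem_filter.mp h2).2.1) (not_lt.mpr (Finset.mem_filter.mp h1).2.1.le)
  have hswap : (Finset.univ.filter (fun xy : Cube d × Cube d =>
        xy.2 < xy.1 ∧ atLevel ℓ xy.1 xy.2)).card
      = (Finset.univ.filter (fun xy : Cube d × Cube d =>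
          xy.1 < xy.2 ∧ atLevel ℓ xy.1 xy.2)).card := by
    refine Finset.card_bij' (i := fun xy _ => (xy.2, xy.1)) (j := fun xy _ => (xy.2, xy.1))
      ?_ ?_ ?_ ?_
    · intro xy hxy
      obtain ⟨_, h1, h2⟩ := Finset.mem_filter.mp hxy
      exact Finset.mem_filter.mpr ⟨Finset.mem_univ _, h1, atLevel_comm h2⟩
    · intro xy hxy
      obtain ⟨_, h1, h2⟩ := Finset.mem_filter.mp hxy
      exact Finset.mem_filter.mpr ⟨Finset.mem_univ _, h1, atLevel_comm h2⟩
    · intro xy _; rfl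
    · intro xy _; rfl
  have hcards := congrArg Finset.card hsplit
  rw [Finset.card_union_of_disjoint hdisj, hswap] at hcards
  have hD : (Finset.univ.filter (fun xy : Cube d × Cube d =>
      atLevel ℓ xy.1 xy.2)).card = 2^(2*d - ℓ) := by
    rw [← hℓi]
    exact cardD d i
  rw [hD] at hcards
  have : 2^(2*d - ℓ) = 2 * 2^(2*d - ℓ - 1) := by
    rw [← pow_succ']
    congr 1
    omega
  omega

/-! ### levelCountB as a product -/

lemma levelCountB_card (d m ℓ : ℕ) (R : SimpleGraph (BlockVert d m)) :
    levelCountB R ℓ = (Finset.univ.filter (fun uv : BlockVert d m × BlockVert d m =>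
      uv.1 < uv.2 ∧ R.Adj uv.1 uv.2 ∧ atLevel ℓ (ofLex uv.1).1 (ofLex uv.2).1)).card := by
  rw [levelCountB, Set.ncard_eq_toFinset_card', Set.toFinset_setOf]

lemma blockLt {d m : ℕ} {u v : BlockVert d m} (h : u < v)
    (hne : (ofLex u).1 ≠ (ofLex v).1) : (ofLex u).1 < (ofLex v).1 := by
  rw [← toLex_ofLex u, ← toLex_ofLex v, Prod.Lex.lt_iff] at h
  rcases h with h | ⟨heq, _⟩
  · exact h
  · exact absurd heq hne

lemma Lf_congr (d m k k' : ℕ) (h : k = k') (z : Fq d m) :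
    Lf d m k z = 0 ↔ Lf d m k' z = 0 := by subst h; rfl

lemma levelCountB_eq (d m ℓ : ℕ) :
    levelCountB (RG d m) ℓ
      = (Finset.univ.filter (fun xy : Cube d × Cube d =>
          xy.1 < xy.2 ∧ atLevel ℓ xy.1 xy.2)).card
        * ((Finset.univ ×ˢ Finset.univ).filter (fun pq : Fin m × Fin m =>
            Lf d m (d - ℓ) (emb d m pq.1 * emb d m pq.2) = 0)).card := by
  rw [levelCountB_card, ← Finset.card_product]
  refine Finset.card_bij'
    (i := fun uv _ => ((((ofLex uv.1).1, (ofLex uv.2).1) : Cube d × Cube d),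
      (((ofLex uv.1).2, (ofLex uv.2).2) : Fin m × Fin m)))
    (j := fun w _ => ((toLex (w.1.1, w.2.1), toLex (w.1.2, w.2.2)) :
      BlockVert d m × BlockVert d m)) ?_ ?_ ?_ ?_
  · intro uv huv
    obtain ⟨_, hlt, hadj, hatl⟩ := Finset.mem_filter.mp huv
    obtain ⟨hne, hLf⟩ := (RG_adj uv.1 uv.2).mp hadj
    rw [lev_eq hatl] at hLf
    refine Finset.mem_product.mpr ⟨?_, ?_⟩
    · exact Finset.mem_filter.mpr ⟨Finset.mem_univ _, blockLt hlt hne, hatl⟩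
    · exact Finset.mem_filter.mpr ⟨Finset.mem_univ _, hLf⟩
  · intro w hw
    obtain ⟨hw1, hw2⟩ := Finset.mem_product.mp hw
    obtain ⟨_, hxy, hatl⟩ := Finset.mem_filter.mp hw1
    have hLf := (Finset.mem_filter.mp hw2).2
    refine Finset.mem_filter.mpr ⟨Finset.mem_univ _, ?_, ?_, ?_⟩
    · rw [Prod.Lex.lt_iff]
      exact Or.inl hxy
    · rw [RG_adj]
      simp only [ofLex_toLex]
      refine ⟨ne_of_lt hxy, ?_⟩
      exact (Lf_congr d m _ _ (by rw [lev_eq hatl]) _).mpr hLf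
    · simpa using hatl
  · intro uv _
    simp
  · intro w _
    simp
    
/-! ### edge count -/

lemma edgeCount_eq_card {V : Type*} [Fintype V] [LinearOrder V] (G : SimpleGraph V) :
    edgeCount G = (Finset.univ.filter (fun uv : V × V =>
      uv.1 < uv.2 ∧ G.Adj uv.1 uv.2)).card := by
  rw [edgeCount, Set.ncard_eq_toFinset_card']
  symm; refine Finset.card_bij (i := fun uv _ => s(uv.1, uv.2)) ?_ ?_ ?_
  · intro uv huv
    rw [Set.mem_toFinset, SimpleGraph.mem_edgeSet]
    exact (Finset.mem_filter.mp huv).2.2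
  · intro a ha b hb hab
    obtain ⟨_, hlt1, _⟩ := Finset.mem_filter.mp ha
    obtain ⟨_, hlt2, _⟩ := Finset.mem_filter.mp hb
    rcases Sym2.eq_iff.mp hab with ⟨h1, h2⟩ | ⟨h1, h2⟩
    · exact Prod.ext h1 h2
    · exfalso
      rw [← h1, ← h2] at hlt2
      exact absurd hlt2 (not_lt.mpr hlt1.le)
  · intro e he
    revert he
    refine Sym2.ind ?_ e
    intro a b he
    rw [Set.mem_toFinset, SimpleGraph.mem_edgeSet] at he
    rcases he.ne.lt_or_gt with hlt | hlt
    · exact ⟨(a, b), Finset.mem_filter.mpr ⟨Finset.mem_univ _, hlt, he⟩, rfl⟩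
    · exact ⟨(b, a), Finset.mem_filter.mpr ⟨Finset.mem_univ _, hlt, he.symm⟩, Sym2.eq_swap⟩

lemma edgeCount_RG (d m : ℕ) :
    edgeCount (RG d m) = ∑ ℓ ∈ Finset.Icc 1 d, levelCountB (RG d m) ℓ := by
  rw [edgeCount_eq_card]
  have hpart : (Finset.univ.filter (fun uv : BlockVert d m × BlockVert d m =>
        uv.1 < uv.2 ∧ (RG d m).Adj uv.1 uv.2))
      = (Finset.Icc 1 d).biUnion (fun ℓ =>
          Finset.univ.filter (fun uv : BlockVert d m × BlockVert d m =>
            uv.1 < uv.2 ∧ (RG d m).Adj uv.1 uv.2 ∧ atLevel ℓ (ofLex uv.1).1 (ofLex uv.2).1)) := by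
    ext uv
    simp only [Finset.mem_biUnion, Finset.mem_filter, Finset.mem_univ, true_and]
    constructor
    · rintro ⟨hlt, hadj⟩
      have hne := ((RG_adj uv.1 uv.2).mp hadj).1
      have hatl := atLevel_lev hne
      exact ⟨lev (ofLex uv.1).1 (ofLex uv.2).1, atLevel_mem hatl, hlt, hadj, hatl⟩
    · rintro ⟨ℓ, _, hlt, hadj, _⟩
      exact ⟨hlt, hadj⟩
  rw [hpart, Finset.card_biUnion]
  · exact Finset.sum_congr rfl fun ℓ _ => (levelCountB_card d m ℓ (RG d m)).symm
  · intro ℓ _ ℓ' _ hne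
    rw [Function.onFun, Finset.disjoint_left]
    intro uv h1 h2
    have ha1 := (Finset.mem_filter.mp h1).2.2.2
    have ha2 := (Finset.mem_filter.mp h2).2.2.2
    exact hne (atLevel_unique ha1 ha2)

/-! ### Analytic bounds -/

lemma d_le_tlen (d m : ℕ) : d ≤ tlen d m := by unfold tlen; omega

lemma disc2 (d m k : ℕ) (hk : k ≤ tlen d m) (hm : 1 ≤ m) (P Q : Finset (Fin m)) :
    |((((P ×ˢ Q).filter (fun pq : Fin m × Fin m =>
        Lf d m k (emb d m pq.1 * emb d m pq.2) = 0)).card : ℝ))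
        - (P.card : ℝ) * Q.card / 2^k|
      ≤ Real.sqrt ((2:ℝ)^(d+1) * m * P.card * Q.card) := by
  refine (disc d m k hk P Q).trans (Real.sqrt_le_sqrt ?_)
  have hcast : (Fintype.card (Fq d m) : ℝ) ≤ 2^(d+1) * m := by
    exact_mod_cast card_Fq_le d m hm
  gcongr

lemma propI_level (d m ℓ : ℕ) (hℓ : ℓ ∈ Finset.Icc 1 d) (hm : 1 ≤ m) (ε : ℝ) (hε : 0 < ε)
    (hm1 : (2:ℝ)^(3*d+3) ≤ ε^2 * m) :
    |(levelCountB (RG d m) ℓ : ℝ) - 2^(d-1) * (m:ℝ)^2| ≤ ε * 2^(d-1) * (m:ℝ)^2 := by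
  simp only [Finset.mem_Icc] at hℓ
  set k := d - ℓ with hk
  have hkt : k ≤ tlen d m := le_trans (by omega) (d_le_tlen d m)
  have hdisc := disc2 d m k hkt hm Finset.univ Finset.univ
  rw [Finset.card_univ, Fintype.card_fin] at hdisc
  have hcount := levelCountB_eq d m ℓ
  rw [cardDlt d ℓ (by simp only [Finset.mem_Icc]; omega)] at hcount
  set N := ((Finset.univ ×ˢ Finset.univ).filter (fun pq : Fin m × Fin m =>
      Lf d m (d - ℓ) (emb d m pq.1 * emb d m pq.2) = 0)).card with hN
  have hcast : (levelCountB (RG d m) ℓ : ℝ) = (2:ℝ)^(2*d - ℓ - 1) * N := by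
    rw [hcount]; push_cast; ring
  have hpowsplit : (2:ℝ)^(2*d - ℓ - 1) = 2^(d-1) * 2^k := by
    rw [← pow_add]
    congr 1
    omega
  have hmain : (2:ℝ)^(2*d - ℓ - 1) * ((m:ℝ) * m / 2^k) = 2^(d-1) * (m:ℝ)^2 := by
    rw [hpowsplit]
    field_simp
  have habs : |(levelCountB (RG d m) ℓ : ℝ) - 2^(d-1) * (m:ℝ)^2|
      = (2:ℝ)^(2*d - ℓ - 1) * |(N:ℝ) - (m:ℝ) * m / 2^k| := by
    rw [hcast, ← hmain, ← mul_sub, abs_mul, abs_of_nonneg (by positivity : (0:ℝ) ≤ (2:ℝ)^(2*d-ℓ-1))]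
  rw [habs]
  have hsqrt : Real.sqrt ((2:ℝ)^(d+1) * m * m * m) = m * Real.sqrt ((2:ℝ)^(d+1) * m) := by
    rw [show (2:ℝ)^(d+1) * m * m * m = (m:ℝ)^2 * ((2:ℝ)^(d+1) * m) by ring,
      Real.sqrt_mul (sq_nonneg _), Real.sqrt_sq (by positivity)]
  rw [hsqrt] at hdisc
  have hkey : Real.sqrt ((2:ℝ)^(d+1) * m) ≤ ε * m / 2^(2*d - ℓ - 1 - (d-1) + (d-1))
      ∨ True := Or.inr trivial
  -- bound: 2^(2d-ℓ-1) ≤ 2^(2d)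
  have hNp : (2:ℝ)^(2*d - ℓ - 1) ≤ 2^(2*d) := by
    apply pow_le_pow_right₀ (by norm_num)
    omega
  have hsq : Real.sqrt ((2:ℝ)^(d+1) * m) ≤ ε * m / 2^(d+1) := by
    have hrhs : (0:ℝ) ≤ ε * m / 2^(d+1) := by positivity
    rw [show ε * m / 2^(d+1) = Real.sqrt ((ε * m / 2^(d+1))^2) from
      (Real.sqrt_sq hrhs).symm]
    apply Real.sqrt_le_sqrt
    rw [div_pow]
    rw [le_div_iff₀ (by positivity : (0:ℝ) < ((2:ℝ)^(d+1))^2)]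
    have hexp : (2:ℝ)^(d+1) * ((2:ℝ)^(d+1))^2 = 2^(3*d+3) := by
      rw [← pow_mul, ← pow_add]
      congr 1
      omega
    calc (2:ℝ)^(d+1) * (m:ℝ) * ((2:ℝ)^(d+1))^2 = 2^(3*d+3) * m := by
          rw [← hexp]; ring
      _ ≤ (ε^2 * m) * m := by
          have hm0 : (0:ℝ) ≤ (m:ℝ) := by positivity
          exact mul_le_mul_of_nonneg_right hm1 hm0
      _ = (ε * m)^2 := by ring
  calc (2:ℝ)^(2*d - ℓ - 1) * |(N:ℝ) - (m:ℝ) * m / 2^k|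
      ≤ (2:ℝ)^(2*d - ℓ - 1) * ((m:ℝ) * Real.sqrt ((2:ℝ)^(d+1) * m)) := by
        gcongr
    _ ≤ (2:ℝ)^(2*d - ℓ - 1) * ((m:ℝ) * (ε * m / 2^(d+1))) := by
        gcongr
    _ ≤ ε * 2^(d-1) * (m:ℝ)^2 := by
        rw [hpowsplit]
        have h2k : (2:ℝ)^k ≤ 2^(d+1) := by
          apply pow_le_pow_right₀ (by norm_num)
          omega
        have e1 : (2:ℝ)^(d-1) * 2^k * ((m:ℝ) * (ε * m / 2^(d+1)))
            = ε * 2^(d-1) * (m:ℝ)^2 * (2^k / 2^(d+1)) := by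
          field_simp
        rw [e1]
        have : (2:ℝ)^k / 2^(d+1) ≤ 1 := by
          rw [div_le_one (by positivity)]
          exact h2k
        exact mul_le_of_le_one_right (by positivity) this

lemma propII_main (d m : ℕ) (hm : 1 ≤ m) (ε : ℝ) (hε : 0 < ε)
    (hm2 : (2:ℝ)^(3*d+3) ≤ ε^2 * (m:ℝ)^((1:ℝ)/3)) :
    PropII (RG d m) ε := by
  intro x y ℓ hatl P Q hP hQ
  have hℓIcc := atLevel_mem hatl
  simp only [Finset.mem_Icc] at hℓIcc
  have hxy := atLevel_ne hatl
  -- identify the set with a Finset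
  have hset : {pq : Fin m × Fin m | pq.1 ∈ P ∧ pq.2 ∈ Q ∧
      (RG d m).Adj (toLex (x, pq.1)) (toLex (y, pq.2))}
      = ↑((P ×ˢ Q).filter (fun pq : Fin m × Fin m =>
          Lf d m (d - ℓ) (emb d m pq.1 * emb d m pq.2) = 0)) := by
    ext pq
    simp only [Set.mem_setOf_eq, Finset.coe_filter, Finset.mem_product, Set.mem_setOf_eq]
    constructor
    · rintro ⟨h1, h2, h3⟩
      obtain ⟨_, hLf⟩ := (RG_adj _ _).mp h3
      simp only [ofLex_toLex] at hLf
      refine ⟨⟨h1, h2⟩, ?_⟩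
      exact (Lf_congr d m _ _ (by rw [lev_eq hatl]) _).mp hLf
    · rintro ⟨⟨h1, h2⟩, hLf⟩
      refine ⟨h1, h2, ?_⟩
      rw [RG_adj]
      simp only [ofLex_toLex]
      exact ⟨hxy, (Lf_congr d m _ _ (by rw [lev_eq hatl]) _).mpr hLf⟩
  rw [hset, Set.ncard_coe_finset]
  -- the discrepancy bound
  set k := d - ℓ with hkdef
  have hkt : k ≤ tlen d m := le_trans (by omega) (d_le_tlen d m)
  have hdisc := disc2 d m k hkt hm P Q
  have habs := (abs_le.mp hdisc).2
  -- rewrite the power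
  have hzpow : (2:ℝ)^((ℓ:ℤ) - (d:ℤ)) = ((2:ℝ)^k)⁻¹ := by
    have h1 : ((ℓ:ℤ) - (d:ℤ)) = -((k:ℕ) : ℤ) := by
      rw [hkdef]
      push_cast [Nat.cast_sub hℓIcc.2]
      ring
    rw [h1, zpow_neg, zpow_natCast]
  rw [hzpow]
  -- it suffices to bound the error term
  set a := (P.card : ℝ) with hadef
  set b := (Q.card : ℝ) with hbdef
  have ha0 : (0:ℝ) ≤ a := by positivity
  have hb0 : (0:ℝ) ≤ b := by positivity
  set r := (m:ℝ)^((1:ℝ)/3) with hrdef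
  have hr0 : (0:ℝ) ≤ r := by positivity
  have hr3 : r^3 = (m:ℝ) := by
    rw [hrdef, ← Real.rpow_natCast ((m:ℝ)^((1:ℝ)/3)) 3, ← Real.rpow_mul (by positivity)]
    norm_num
  have hr2 : (m:ℝ)^((2:ℝ)/3) = r^2 := by
    rw [hrdef, ← Real.rpow_natCast ((m:ℝ)^((1:ℝ)/3)) 2, ← Real.rpow_mul (by positivity)]
    norm_num
  rw [hr2] at hP hQ
  have hab : r^4 ≤ a * b := by
    calc r^4 = r^2 * r^2 := by ring
      _ ≤ a * b := mul_le_mul hP hQ (sq_nonneg r) ha0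
  have herr : Real.sqrt ((2:ℝ)^(d+1) * m * a * b) ≤ ε * (a * b) / 2^k := by
    have hrhs : (0:ℝ) ≤ ε * (a * b) / 2^k := by positivity
    rw [show ε * (a * b) / 2^k = Real.sqrt ((ε * (a * b) / 2^k)^2) from
      (Real.sqrt_sq hrhs).symm]
    apply Real.sqrt_le_sqrt
    rw [div_pow, le_div_iff₀ (by positivity : (0:ℝ) < ((2:ℝ)^k)^2)]
    have h2k : ((2:ℝ)^k)^2 ≤ ((2:ℝ)^d)^2 := by
      gcongr
      · norm_num
      · omega
    have hstep : (2:ℝ)^(d+1) * (m:ℝ) * a * b * ((2:ℝ)^d)^2 ≤ (ε * (a*b))^2 := by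
      have hexp : (2:ℝ)^(d+1) * ((2:ℝ)^d)^2 = 2^(3*d+1) := by
        rw [← pow_mul, ← pow_add]
        congr 1
        omega
      have hc1 : (2:ℝ)^(3*d+1) * (m:ℝ) * (a*b) ≤ (ε^2 * r) * (m:ℝ) * (a*b) := by
        have h31 : (2:ℝ)^(3*d+1) ≤ 2^(3*d+3) := by
          apply pow_le_pow_right₀ (by norm_num)
          omega
        have h32 := h31.trans hm2
        have hm0 : (0:ℝ) ≤ (m:ℝ) := by positivity
        have hab0 : (0:ℝ) ≤ a * b := mul_nonneg ha0 hb0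
        exact mul_le_mul_of_nonneg_right (mul_le_mul_of_nonneg_right h32 hm0) hab0
      have hc2 : (ε^2 * r) * (m:ℝ) * (a*b) ≤ ε^2 * (a*b)^2 := by
        have : r * (m:ℝ) = r^4 := by rw [← hr3]; ring
        calc (ε^2 * r) * (m:ℝ) * (a*b) = ε^2 * (r * (m:ℝ)) * (a*b) := by ring
          _ = ε^2 * r^4 * (a*b) := by rw [this]
          _ ≤ ε^2 * (a*b) * (a*b) := by
              have hab0 : (0:ℝ) ≤ a * b := mul_nonneg ha0 hb0
              have hε2 : (0:ℝ) ≤ ε^2 := sq_nonneg ε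
              exact mul_le_mul_of_nonneg_right (mul_le_mul_of_nonneg_left hab hε2) hab0
          _ = ε^2 * (a*b)^2 := by ring
      calc (2:ℝ)^(d+1) * (m:ℝ) * a * b * ((2:ℝ)^d)^2
          = (2:ℝ)^(3*d+1) * (m:ℝ) * (a*b) := by rw [← hexp]; ring
        _ ≤ (ε^2 * r) * (m:ℝ) * (a*b) := hc1
        _ ≤ ε^2 * (a*b)^2 := hc2
        _ = (ε * (a*b))^2 := by ring
    calc (2:ℝ)^(d+1) * (m:ℝ) * a * b * ((2:ℝ)^k)^2
        ≤ (2:ℝ)^(d+1) * (m:ℝ) * a * b * ((2:ℝ)^d)^2 := by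
          have : (0:ℝ) ≤ (2:ℝ)^(d+1) * (m:ℝ) * a * b := by positivity
          exact mul_le_mul_of_nonneg_left h2k this
      _ ≤ (ε * (a*b))^2 := hstep
  -- final
  calc ((((P ×ˢ Q).filter (fun pq : Fin m × Fin m =>
          Lf d m (d - ℓ) (emb d m pq.1 * emb d m pq.2) = 0)).card : ℝ))
      ≤ a * b / 2^k + Real.sqrt ((2:ℝ)^(d+1) * m * a * b) := by
        have := habs
        linarith
    _ ≤ a * b / 2^k + ε * (a * b) / 2^k := by linarith
    _ = (1 + ε) * ((2:ℝ)^k)⁻¹ * a * b := by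
        rw [div_eq_mul_inv, div_eq_mul_inv]
        ring
  
end S4
end

/-- For every `d` there is a family of graphs `R(m,d)` on `{0,1}^d × [m]`
such that for every `ε > 0` and all sufficiently large `m`, property (i) holds with accuracy
`ε` (together with the consequent bound on the total number of edges), and property (ii)
holds with accuracy `ε`. -/
theorem exists_Rmd_family (d : ℕ) :
    ∃ R : ∀ m : ℕ, SimpleGraph (BlockVert d m),
      ∀ ε : ℝ, 0 < ε → ∃ m₀ : ℕ, ∀ m ≥ m₀,
        PropI (R m) ε ∧
        (1 - ε) * (d : ℝ) * 2 ^ (d - 1) * (m : ℝ) ^ 2 ≤ (edgeCount (R m) : ℝ) ∧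
        (edgeCount (R m) : ℝ) ≤ (1 + ε) * (d : ℝ) * 2 ^ (d - 1) * (m : ℝ) ^ 2 ∧
        PropII (R m) ε := by
  refine ⟨fun m => S4.RG d m, ?_⟩
  intro ε hε
  set B : ℝ := (2:ℝ)^(3*d+3)/ε^2 with hB
  have hB0 : 0 ≤ B := by positivity
  refine ⟨⌈B^3 + B⌉₊ + 1, ?_⟩
  intro m hm
  have hm1 : 1 ≤ m := by omega
  have hmR : B^3 + B ≤ (m:ℝ) := by
    calc B^3 + B ≤ (⌈B^3 + B⌉₊ : ℝ) := Nat.le_ceil _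
      _ ≤ m := by exact_mod_cast Nat.le_of_succ_le hm
  have hB30 : (0:ℝ) ≤ B^3 := by positivity
  have hmB : B ≤ (m:ℝ) := by linarith
  have hmB3 : B^3 ≤ (m:ℝ) := by linarith
  have hεB : ε^2 * B = 2^(3*d+3) := by
    rw [hB]
    field_simp
  have hεm : (2:ℝ)^(3*d+3) ≤ ε^2 * m := by
    rw [← hεB]
    exact mul_le_mul_of_nonneg_left hmB (sq_nonneg ε)
  set r := (m:ℝ)^((1:ℝ)/3) with hrdef
  have hr0 : (0:ℝ) ≤ r := by positivity
  have hr3 : r^3 = (m:ℝ) := by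
    rw [hrdef, ← Real.rpow_natCast ((m:ℝ)^((1:ℝ)/3)) 3, ← Real.rpow_mul (by positivity)]
    norm_num
  have hrB : B ≤ r := by
    by_contra hlt
    push_neg at hlt
    have h3 : r^3 < B^3 := by
      apply pow_lt_pow_left₀ hlt hr0
      norm_num
    rw [hr3] at h3
    linarith
  have hεr : (2:ℝ)^(3*d+3) ≤ ε^2 * r := by
    rw [← hεB]
    exact mul_le_mul_of_nonneg_left hrB (sq_nonneg ε)
  have hPropI : PropI (S4.RG d m) ε := by
    intro ℓ hℓ
    have hlev := S4.propI_level d m ℓ hℓ hm1 ε hε hεm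
    have h2 := abs_le.mp hlev
    have e1 : (1 - ε) * 2^(d-1) * (m:ℝ)^2 = 2^(d-1) * (m:ℝ)^2 - ε * 2^(d-1) * (m:ℝ)^2 := by
      ring
    have e2 : (1 + ε) * 2^(d-1) * (m:ℝ)^2 = 2^(d-1) * (m:ℝ)^2 + ε * 2^(d-1) * (m:ℝ)^2 := by
      ring
    constructor
    · rw [e1]; linarith [h2.1]
    · rw [e2]; linarith [h2.2]
  have hsum : (edgeCount (S4.RG d m) : ℝ)
      = ∑ ℓ ∈ Finset.Icc 1 d, (levelCountB (S4.RG d m) ℓ : ℝ) := by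
    rw [S4.edgeCount_RG]
    push_cast
    rfl
  have hcardIcc : ((Finset.Icc 1 d).card : ℝ) = d := by
    rw [Nat.card_Icc]
    push_cast
    ring
  refine ⟨hPropI, ?_, ?_, S4.propII_main d m hm1 ε hε hεr⟩
  · rw [hsum]
    calc (1 - ε) * (d:ℝ) * 2^(d-1) * (m:ℝ)^2
        = ∑ _ℓ ∈ Finset.Icc 1 d, (1 - ε) * 2^(d-1) * (m:ℝ)^2 := by
          rw [Finset.sum_const, nsmul_eq_mul, hcardIcc]
          ring
      _ ≤ ∑ ℓ ∈ Finset.Icc 1 d, (levelCountB (S4.RG d m) ℓ : ℝ) :=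
          Finset.sum_le_sum fun ℓ hℓ => (hPropI ℓ hℓ).1
  · rw [hsum]
    calc ∑ ℓ ∈ Finset.Icc 1 d, (levelCountB (S4.RG d m) ℓ : ℝ)
        ≤ ∑ _ℓ ∈ Finset.Icc 1 d, (1 + ε) * 2^(d-1) * (m:ℝ)^2 :=
          Finset.sum_le_sum fun ℓ hℓ => (hPropI ℓ hℓ).2
      _ = (1 + ε) * (d:ℝ) * 2^(d-1) * (m:ℝ)^2 := by
          rw [Finset.sum_const, nsmul_eq_mul, hcardIcc]
          ring
end

section
/- Every ordered graph F on k vertices that does not contain a monotone path of length two is an ordered subgraph of H_k; that is, there is a strictly order-preserving injection from V(F) to V(H_k) mapping every edge of F to an edge of H_k. -/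
open scoped Classical

/-- Every ordered graph `F` on `k` vertices with no monotone path of length
two is an ordered subgraph of `H_k`. -/
theorem embeds_in_Hk
    {α : Type*} [Fintype α] [LinearOrder α] (F : SimpleGraph α)
    (k : ℕ) (hk : Fintype.card α = k)
    (hF : ¬ HasMonotonePathTwo F) :
    ContainsOrderedCopy F (Hgraph k) := by
  classical
  let e : α ≃o Fin k := (monoEquivOfFin α hk).symm
  let b : α → Bool := fun v => if ∃ w, w < v ∧ F.Adj w v then true else false
  refine ⟨fun v => toLex (e v, b v), ?_, ?_⟩
  · intro u v huv
    exact Prod.Lex.left _ _ (e.strictMono huv)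
  · intro u v huv
    -- WLOG u < v
    have key : ∀ u v : α, u < v → F.Adj u v →
        (Hgraph k).Adj (toLex (e u, b u)) (toLex (e v, b v)) := by
      intro u v huv hadj
      have hnu : ¬ ∃ w, w < u ∧ F.Adj w u := by
        rintro ⟨w, hw, hwadj⟩
        exact hF ⟨w, u, v, hw, huv, hwadj, hadj⟩
      have hbu : b u = false := by simp [b, hnu]
      have hv : ∃ w, w < v ∧ F.Adj w v := ⟨u, huv, hadj⟩
      have hbv : b v = true := by simp [b, hv]
      have hne : e u ≠ e v := fun h => (huv.ne (e.injective h))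
      constructor
      · intro h
        exact hne (congrArg (fun p => (ofLex p).1) h)
      · left
        refine ⟨?_, ?_, ?_⟩
        · simpa using hbu
        · simpa using hbv
        · exact le_of_lt (e.strictMono huv)
    rcases lt_trichotomy u v with h | h | h
    · exact key u v h huv
    · exact absurd (h ▸ huv) (F.irrefl)
    · exact ((key v u h huv.symm).symm)
end

section
/- For all ε > 0 there exists N ∈ ℕ such that for all n > N, all but at most ε·2^n strings x ∈ {0,1}^n have the following property: every integer interval J ⊆ [n] of length at least (ln n)² satisfies |Σ_{i∈J} x_i − |J|/2| < ε·|J|. -/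
open Finset Real
open scoped Classical
set_option maxHeartbeats 1000000 in

-- MGF computation
private lemma sum_exp_bound (n : ℕ) (J : Finset (Fin n)) (u : ℝ) :
    ∑ x : Fin n → Bool,
        Real.exp (u * ((∑ i ∈ J, if x i = true then (1:ℝ) else 0) - (J.card : ℝ) / 2))
      ≤ 2 ^ n * Real.exp (u ^ 2 * J.card / 8) := by
  have h1 : ∀ x : Fin n → Bool,
      Real.exp (u * ((∑ i ∈ J, if x i = true then (1:ℝ) else 0) - (J.card : ℝ) / 2))
        = ∏ i : Fin n, (if i ∈ J then
            Real.exp (u * ((if x i = true then (1:ℝ) else 0) - 1/2)) else 1) := by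
    intro x
    rw [Finset.prod_ite_mem, Finset.univ_inter, ← Real.exp_sum]
    congr 1
    rw [← Finset.mul_sum]
    congr 1
    rw [Finset.sum_sub_distrib, Finset.sum_const]
    push_cast
    ring
  calc ∑ x : Fin n → Bool,
        Real.exp (u * ((∑ i ∈ J, if x i = true then (1:ℝ) else 0) - (J.card : ℝ) / 2))
      = ∑ x : Fin n → Bool, ∏ i : Fin n, (if i ∈ J then
            Real.exp (u * ((if x i = true then (1:ℝ) else 0) - 1/2)) else 1) := by
        exact Finset.sum_congr rfl fun x _ => h1 x
    _ = ∏ i : Fin n, ∑ b : Bool, (if i ∈ J then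
            Real.exp (u * ((if b = true then (1:ℝ) else 0) - 1/2)) else 1) := by
        rw [Fintype.prod_sum]
    _ = ∏ i : Fin n, (if i ∈ J then Real.exp (u/2) + Real.exp (-(u/2)) else 2) := by
        refine Finset.prod_congr rfl fun i _ => ?_
        rw [Fintype.sum_bool]
        by_cases h : i ∈ J
        · rw [if_pos h, if_pos h, if_pos h, if_pos rfl,
            if_neg (by simp : ¬(false = true)),
            show u*((1:ℝ)-1/2) = u/2 by ring, show u*((0:ℝ)-1/2) = -(u/2) by ring]
        · rw [if_neg h, if_neg h, if_neg h]; norm_num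
    _ = (Real.exp (u/2) + Real.exp (-(u/2))) ^ J.card * 2 ^ (n - J.card) := by
        rw [← Finset.prod_sdiff (Finset.subset_univ J)]
        rw [Finset.prod_congr rfl (fun i hi => if_neg (Finset.mem_sdiff.mp hi).2),
          Finset.prod_congr (rfl : J = J) (fun i hi => if_pos hi),
          Finset.prod_const, Finset.prod_const, Finset.card_sdiff_of_subset (Finset.subset_univ J),
          Finset.card_univ, Fintype.card_fin, mul_comm]
    _ ≤ (2 * Real.exp ((u/2)^2/2)) ^ J.card * 2 ^ (n - J.card) := by
        have hc : Real.exp (u/2) + Real.exp (-(u/2)) ≤ 2 * Real.exp ((u/2)^2/2) := by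
          have := Real.cosh_le_exp_half_sq (u/2)
          rw [Real.cosh_eq] at this
          linarith
        exact mul_le_mul_of_nonneg_right (pow_le_pow_left₀ (by positivity) hc _) (by positivity)
    _ = 2 ^ n * Real.exp (u ^ 2 * J.card / 8) := by
        rw [mul_pow, ← Real.exp_nat_mul]
        have hcard : J.card ≤ n := by
          simpa using Finset.card_le_card (Finset.subset_univ J)
        rw [show (J.card : ℝ) * ((u/2)^2/2) = u^2 * J.card / 8 by ring]
        rw [mul_assoc, mul_comm ((2:ℝ)^J.card), mul_assoc, ← pow_add]
        rw [Nat.sub_add_cancel hcard, mul_comm]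

lemma chernoff_count (n : ℕ) (J : Finset (Fin n)) (c u : ℝ) :
    ((Finset.univ.filter (fun x : Fin n → Bool =>
        c ≤ u * ((∑ i ∈ J, if x i = true then (1:ℝ) else 0) - (J.card : ℝ) / 2))).card : ℝ)
      ≤ 2 ^ n * Real.exp (u ^ 2 * J.card / 8 - c) := by
  have key : ((Finset.univ.filter (fun x : Fin n → Bool =>
      c ≤ u * ((∑ i ∈ J, if x i = true then (1:ℝ) else 0) - (J.card : ℝ) / 2))).card : ℝ)
      * Real.exp c ≤ 2 ^ n * Real.exp (u ^ 2 * J.card / 8) := by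
    calc ((Finset.univ.filter (fun x : Fin n → Bool =>
        c ≤ u * ((∑ i ∈ J, if x i = true then (1:ℝ) else 0) - (J.card : ℝ) / 2))).card : ℝ)
        * Real.exp c
        = ∑ _x ∈ Finset.univ.filter (fun x : Fin n → Bool =>
            c ≤ u * ((∑ i ∈ J, if x i = true then (1:ℝ) else 0) - (J.card : ℝ) / 2)),
            Real.exp c := by rw [Finset.sum_const, nsmul_eq_mul]
      _ ≤ ∑ x ∈ Finset.univ.filter (fun x : Fin n → Bool =>
            c ≤ u * ((∑ i ∈ J, if x i = true then (1:ℝ) else 0) - (J.card : ℝ) / 2)),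
            Real.exp (u * ((∑ i ∈ J, if x i = true then (1:ℝ) else 0) - (J.card : ℝ) / 2)) := by
          refine Finset.sum_le_sum fun x hx => Real.exp_le_exp.mpr ?_
          exact (Finset.mem_filter.mp hx).2
      _ ≤ ∑ x : Fin n → Bool,
            Real.exp (u * ((∑ i ∈ J, if x i = true then (1:ℝ) else 0) - (J.card : ℝ) / 2)) := by
          refine Finset.sum_le_sum_of_subset_of_nonneg (Finset.filter_subset _ _)
            fun x _ _ => (Real.exp_pos _).le
      _ ≤ 2 ^ n * Real.exp (u ^ 2 * J.card / 8) := sum_exp_bound n J u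
  have h2 : (0:ℝ) < Real.exp c := Real.exp_pos c
  rw [Real.exp_sub]
  rw [← le_div_iff₀ h2] at key
  calc _ ≤ 2 ^ n * Real.exp (u ^ 2 * J.card / 8) / Real.exp c := key
    _ = 2 ^ n * (Real.exp (u ^ 2 * J.card / 8) / Real.exp c) := by ring

-- per-interval bad-set bound
lemma interval_bad_count (n : ℕ) (J : Finset (Fin n)) (ε L : ℝ) (hε : 0 < ε) (hL : L ≤ (J.card : ℝ)) :
    ((Finset.univ.filter (fun x : Fin n → Bool =>
        ε * (J.card : ℝ) ≤ |(∑ i ∈ J, if x i = true then (1:ℝ) else 0) - (J.card : ℝ) / 2|)).card : ℝ)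
      ≤ 2 * 2 ^ n * Real.exp (-(2 * ε ^ 2 * L)) := by
  set S := fun x : Fin n → Bool => (∑ i ∈ J, if x i = true then (1:ℝ) else 0) - (J.card : ℝ) / 2
  have hm : (0:ℝ) ≤ (J.card : ℝ) := Nat.cast_nonneg _
  have hsub : (Finset.univ.filter (fun x : Fin n → Bool => ε * (J.card : ℝ) ≤ |S x|))
      ⊆ (Finset.univ.filter (fun x : Fin n → Bool => 4*ε^2*(J.card : ℝ) ≤ (4*ε) * S x))
        ∪ (Finset.univ.filter (fun x : Fin n → Bool => 4*ε^2*(J.card : ℝ) ≤ (-(4*ε)) * S x)) := by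
    intro x hx
    have hx' := (Finset.mem_filter.mp hx).2
    rcases le_abs.mp hx' with h | h
    · refine Finset.mem_union_left _ (Finset.mem_filter.mpr ⟨Finset.mem_univ _, ?_⟩)
      calc (4:ℝ)*ε^2*(J.card : ℝ) = (4*ε) * (ε * J.card) := by ring
        _ ≤ (4*ε) * S x := by
          apply mul_le_mul_of_nonneg_left h (by positivity)
    · refine Finset.mem_union_right _ (Finset.mem_filter.mpr ⟨Finset.mem_univ _, ?_⟩)
      calc (4:ℝ)*ε^2*(J.card : ℝ) = (4*ε) * (ε * J.card) := by ring
        _ ≤ (4*ε) * (-S x) := mul_le_mul_of_nonneg_left h (by positivity)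
        _ = (-(4*ε)) * S x := by ring
  have h1 := chernoff_count n J (4*ε^2*(J.card : ℝ)) (4*ε)
  have h2 := chernoff_count n J (4*ε^2*(J.card : ℝ)) (-(4*ε))
  have harg : ∀ u : ℝ, u = 4*ε ∨ u = -(4*ε) →
      u ^ 2 * (J.card : ℝ) / 8 - 4*ε^2*(J.card : ℝ) ≤ -(2 * ε ^ 2 * L) := by
    intro u hu
    have hu2 : u ^ 2 = 16 * ε ^ 2 := by rcases hu with h | h <;> rw [h] <;> ring
    rw [hu2]
    have : 2 * ε ^ 2 * L ≤ 2 * ε ^ 2 * (J.card : ℝ) := by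
      apply mul_le_mul_of_nonneg_left hL (by positivity)
    nlinarith
  have hexp : ∀ u : ℝ, u = 4*ε ∨ u = -(4*ε) →
      Real.exp (u ^ 2 * (J.card:ℝ) / 8 - 4*ε^2*(J.card : ℝ)) ≤ Real.exp (-(2 * ε ^ 2 * L)) :=
    fun u hu => Real.exp_le_exp.mpr (harg u hu)
  calc ((Finset.univ.filter (fun x : Fin n → Bool => ε * (J.card : ℝ) ≤ |S x|)).card : ℝ)
      ≤ (((Finset.univ.filter (fun x : Fin n → Bool => 4*ε^2*(J.card : ℝ) ≤ (4*ε) * S x))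
        ∪ (Finset.univ.filter (fun x : Fin n → Bool => 4*ε^2*(J.card : ℝ) ≤ (-(4*ε)) * S x))).card : ℝ) := by
        exact_mod_cast Finset.card_le_card hsub
    _ ≤ ((Finset.univ.filter (fun x : Fin n → Bool => 4*ε^2*(J.card : ℝ) ≤ (4*ε) * S x)).card : ℝ)
        + ((Finset.univ.filter (fun x : Fin n → Bool => 4*ε^2*(J.card : ℝ) ≤ (-(4*ε)) * S x)).card : ℝ) := by
        exact_mod_cast Finset.card_union_le _ _
    _ ≤ 2 ^ n * Real.exp (-(2 * ε ^ 2 * L)) + 2 ^ n * Real.exp (-(2 * ε ^ 2 * L)) := by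
        have b1 := h1.trans (by
          apply mul_le_mul_of_nonneg_left (hexp _ (Or.inl rfl)) (by positivity))
        have b2 := h2.trans (by
          apply mul_le_mul_of_nonneg_left (hexp _ (Or.inr rfl)) (by positivity))
        exact add_le_add b1 b2
    _ = 2 * 2 ^ n * Real.exp (-(2 * ε ^ 2 * L)) := by ring
/-- For every `ε > 0` there is `N` such that for all `n > N`, all but at
most `ε·2^n` strings `x ∈ {0,1}^n` satisfy: every integer interval `J ⊆ [n]` of length at
least `(ln n)²` has `|Σ_{i∈J} x_i − |J|/2| < ε·|J|`. -/
theorem locally_balanced (ε : ℝ) (hε : 0 < ε) :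
    ∃ N : ℕ, ∀ n : ℕ, n > N →
      ({x : Fin n → Bool | ¬ ∀ a b : Fin n,
          Real.log n ^ 2 ≤ ((Finset.Icc a b).card : ℝ) →
          |(∑ i ∈ Finset.Icc a b, if x i = true then (1 : ℝ) else 0) -
              ((Finset.Icc a b).card : ℝ) / 2| < ε * ((Finset.Icc a b).card : ℝ)}.ncard : ℝ)
        ≤ ε * 2 ^ n := by
  set C : ℝ := (2 + |Real.log (ε/2)|) / (2*ε^2) with hC
  refine ⟨⌈Real.exp (max 1 C)⌉₊, fun n hn => ?_⟩
  have hexpn : Real.exp (max 1 C) ≤ (n:ℝ) := by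
    calc Real.exp (max 1 C) ≤ (⌈Real.exp (max 1 C)⌉₊ : ℝ) := Nat.le_ceil _
      _ ≤ (n:ℝ) := by exact_mod_cast Nat.le_of_lt hn
  have hnpos : (0:ℝ) < n := lt_of_lt_of_le (Real.exp_pos _) hexpn
  set l : ℝ := Real.log n with hldef
  have hl : max 1 C ≤ l := (Real.le_log_iff_exp_le hnpos).mpr hexpn
  have hl1 : 1 ≤ l := le_trans (le_max_left _ _) hl
  have hlC : C ≤ l := le_trans (le_max_right _ _) hl
  have hl0 : (0:ℝ) ≤ l := le_trans zero_le_one hl1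
  -- the key numeric inequality
  have key : 2 * (n:ℝ)^2 * Real.exp (-(2*ε^2*l^2)) ≤ ε := by
    have hn_exp : (n:ℝ) = Real.exp l := (Real.exp_log hnpos).symm
    have hCA : C * (2*ε^2) = 2 + |Real.log (ε/2)| := by
      rw [hC]; field_simp
    have hA : -Real.log (ε/2) ≤ |Real.log (ε/2)| := neg_le_abs _
    have hA0 : (0:ℝ) ≤ |Real.log (ε/2)| := abs_nonneg _
    have hCl : C * l ≤ l * l := mul_le_mul_of_nonneg_right hlC hl0
    have harg : 2*l - 2*ε^2*l^2 ≤ Real.log (ε/2) := by nlinarith [sq_nonneg ε]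
    calc 2 * (n:ℝ)^2 * Real.exp (-(2*ε^2*l^2))
        = 2 * Real.exp (2*l - 2*ε^2*l^2) := by
          rw [hn_exp, ← Real.exp_nat_mul, mul_assoc, ← Real.exp_add]
          push_cast
          ring_nf
      _ ≤ 2 * Real.exp (Real.log (ε/2)) := by
          have := Real.exp_le_exp.mpr harg
          linarith
      _ = ε := by rw [Real.exp_log (by positivity)]; ring
  -- convert ncard to a filter card
  have hset : ({x : Fin n → Bool | ¬ ∀ a b : Fin n,
      Real.log n ^ 2 ≤ ((Finset.Icc a b).card : ℝ) →
      |(∑ i ∈ Finset.Icc a b, if x i = true then (1 : ℝ) else 0) -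
          ((Finset.Icc a b).card : ℝ) / 2| < ε * ((Finset.Icc a b).card : ℝ)}.ncard : ℝ)
      = ((Finset.univ.filter (fun x : Fin n → Bool => ¬ ∀ a b : Fin n,
      Real.log n ^ 2 ≤ ((Finset.Icc a b).card : ℝ) →
      |(∑ i ∈ Finset.Icc a b, if x i = true then (1 : ℝ) else 0) -
          ((Finset.Icc a b).card : ℝ) / 2| < ε * ((Finset.Icc a b).card : ℝ))).card : ℝ) := by
    congr 1
    rw [Set.ncard_eq_toFinset_card']
    congr 1
    ext x
    simp
  rw [hset]
  -- union bound
  set badp : Fin n → Fin n → (Fin n → Bool) → Prop := fun a b x =>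
    Real.log n ^ 2 ≤ ((Finset.Icc a b).card : ℝ) ∧
      ε * ((Finset.Icc a b).card : ℝ) ≤
        |(∑ i ∈ Finset.Icc a b, if x i = true then (1 : ℝ) else 0) -
          ((Finset.Icc a b).card : ℝ) / 2| with hbadp
  have hsub : (Finset.univ.filter (fun x : Fin n → Bool => ¬ ∀ a b : Fin n,
      Real.log n ^ 2 ≤ ((Finset.Icc a b).card : ℝ) →
      |(∑ i ∈ Finset.Icc a b, if x i = true then (1 : ℝ) else 0) -
          ((Finset.Icc a b).card : ℝ) / 2| < ε * ((Finset.Icc a b).card : ℝ)))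
      ⊆ Finset.univ.biUnion (fun a : Fin n => Finset.univ.biUnion (fun b : Fin n =>
          Finset.univ.filter (badp a b))) := by
    intro x hx
    have hx' := (Finset.mem_filter.mp hx).2
    push_neg at hx'
    obtain ⟨a, b, h1, h2⟩ := hx'
    refine Finset.mem_biUnion.mpr ⟨a, Finset.mem_univ _, Finset.mem_biUnion.mpr
      ⟨b, Finset.mem_univ _, Finset.mem_filter.mpr ⟨Finset.mem_univ _, h1, h2⟩⟩⟩
  have hpair : ∀ a b : Fin n, ((Finset.univ.filter (badp a b)).card : ℝ)
      ≤ 2 * 2 ^ n * Real.exp (-(2 * ε ^ 2 * l^2)) := by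
    intro a b
    by_cases hL : Real.log n ^ 2 ≤ ((Finset.Icc a b).card : ℝ)
    · have hmono : Finset.univ.filter (badp a b) ⊆
          Finset.univ.filter (fun x : Fin n → Bool =>
            ε * ((Finset.Icc a b).card : ℝ) ≤
              |(∑ i ∈ Finset.Icc a b, if x i = true then (1:ℝ) else 0) -
                ((Finset.Icc a b).card : ℝ) / 2|) := by
        refine Finset.monotone_filter_right _ ?_
        intro x _ hx
        exact hx.2
      calc ((Finset.univ.filter (badp a b)).card : ℝ)
          ≤ _ := by exact_mod_cast Finset.card_le_card hmono
        _ ≤ 2 * 2 ^ n * Real.exp (-(2 * ε ^ 2 * l^2)) :=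
            interval_bad_count n (Finset.Icc a b) ε (l^2) hε hL
    · have : Finset.univ.filter (badp a b) = ∅ := by
        refine Finset.filter_false_of_mem ?_
        intro x _
        rw [hbadp]
        exact fun h => hL h.1
      rw [this]
      simp
      positivity
  calc ((Finset.univ.filter (fun x : Fin n → Bool => ¬ ∀ a b : Fin n,
      Real.log n ^ 2 ≤ ((Finset.Icc a b).card : ℝ) →
      |(∑ i ∈ Finset.Icc a b, if x i = true then (1 : ℝ) else 0) -
          ((Finset.Icc a b).card : ℝ) / 2| < ε * ((Finset.Icc a b).card : ℝ))).card : ℝ)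
      ≤ ((Finset.univ.biUnion (fun a : Fin n => Finset.univ.biUnion (fun b : Fin n =>
          Finset.univ.filter (badp a b)))).card : ℝ) := by
        exact_mod_cast Finset.card_le_card hsub
    _ ≤ ∑ a : Fin n, ((Finset.univ.biUnion (fun b : Fin n =>
          Finset.univ.filter (badp a b))).card : ℝ) := by
        exact_mod_cast Finset.card_biUnion_le
    _ ≤ ∑ a : Fin n, ∑ b : Fin n, ((Finset.univ.filter (badp a b)).card : ℝ) := by
        refine Finset.sum_le_sum fun a _ => ?_
        exact_mod_cast Finset.card_biUnion_le
    _ ≤ ∑ _a : Fin n, ∑ _b : Fin n, (2 * 2 ^ n * Real.exp (-(2 * ε ^ 2 * l^2))) := by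
        exact Finset.sum_le_sum fun a _ => Finset.sum_le_sum fun b _ => hpair a b
    _ = (n:ℝ)^2 * (2 * 2 ^ n * Real.exp (-(2 * ε ^ 2 * l^2))) := by
        simp [Finset.sum_const, Finset.card_univ]
        ring
    _ = (2 * (n:ℝ)^2 * Real.exp (-(2*ε^2*l^2))) * 2 ^ n := by ring
    _ ≤ ε * 2 ^ n := by
        have h2n : (0:ℝ) ≤ 2 ^ n := by positivity
        exact mul_le_mul_of_nonneg_right key h2n
end

section
/- For all α > 0, ε > 0, and k ∈ ℕ, there exist η > 0 and N ∈ ℕ such that for all n > N the following holds. Suppose f : [n] → [0,1] has the property that for every integer interval J ⊆ [n] of length at least ⌊η·n⌋, the average of f over J satisfies |(1/|J|)·Σ_{t∈J} f(t) − α| ≤ η. Then for all x, y ∈ [k], Σ_{t=⌈η·n⌉}^{⌊(1−η)·n⌋} f(t)·C(t−1, x)·C(n−t, y) ≥ (1−ε)·α·C(n, x+y+1). -/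
set_option maxHeartbeats 1000000

open Finset

lemma hockey (x : ℕ) : ∀ n : ℕ, ∑ i ∈ range n, i.choose x = n.choose (x+1) := by
  intro n
  induction n with
  | zero => simp
  | succ n ih => rw [sum_range_succ, ih, Nat.choose_succ_succ' n x]; omega

lemma conv_id (x : ℕ) : ∀ (n y : ℕ),
    ∑ i ∈ range n, (i.choose x) * ((n - 1 - i).choose y) = n.choose (x + y + 1) := by
  intro n
  induction n with
  | zero => intro y; simp
  | succ n ih =>
    intro y
    cases y with
    | zero => simpa using hockey x (n+1)
    | succ y =>
      rw [sum_range_succ]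
      have h0 : (n + 1 - 1 - n).choose (y+1) = 0 := by
        have : n + 1 - 1 - n = 0 := by omega
        rw [this]; simp
      have hsp : ∑ i ∈ range n, (i.choose x) * ((n + 1 - 1 - i).choose (y+1))
           = ∑ i ∈ range n, ((i.choose x) * ((n-1-i).choose y) + (i.choose x) * ((n-1-i).choose (y+1))) := by
        apply sum_congr rfl; intro i hi
        have hi' : i < n := mem_range.mp hi
        have h1 : n + 1 - 1 - i = (n - 1 - i) + 1 := by omega
        rw [h1, Nat.choose_succ_succ, Nat.mul_add]
      rw [hsp, sum_add_distrib, ih y, ih (y+1), h0]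
      have hp : (n+1).choose ((x+y+1)+1) = n.choose (x+y+1) + n.choose ((x+y+1)+1) :=
        Nat.choose_succ_succ n (x+y+1)
      have he1 : x + (y+1) + 1 = (x+y+1)+1 := by ring
      have he2 : x + y + 1 + 1 = (x+y+1)+1 := by ring
      rw [he1, he2, hp]
      omega

lemma full_sum (x y n : ℕ) :
    ∑ t ∈ Finset.Ico 1 (n+1), ((t-1).choose x) * ((n - t).choose y) = n.choose (x+y+1) := by
  rw [← conv_id x n y, Finset.sum_Ico_eq_sum_range]
  apply Finset.sum_congr (by norm_num) (fun i _ => by congr 1 <;> congr 1 <;> omega)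

lemma block_sum (g : ℕ → ℝ) (A L : ℕ) : ∀ Q : ℕ,
    ∑ t ∈ Finset.Ico A (A + Q*L), g t
      = ∑ i ∈ range Q, ∑ t ∈ Finset.Ico (A + i*L) (A + i*L + L), g t := by
  intro Q
  induction Q with
  | zero => simp
  | succ Q ih =>
    rw [sum_range_succ, ← ih,
      show A + (Q+1)*L = (A + Q*L) + L by ring,
      ← Finset.sum_Ico_consecutive g (by omega : A ≤ A + Q*L) (by omega : A + Q*L ≤ A + Q*L + L)]

lemma step_bound (n x y u : ℕ) (hx : 1 ≤ x) (hy : 1 ≤ y) (hu : 1 ≤ u) (hun : u < n) :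
    |((u.choose x : ℝ) * ((n - (u+1)).choose y : ℝ)) -
      (((u-1).choose x : ℝ) * ((n - u).choose y : ℝ))| ≤ (n:ℝ)^(x+y-1) := by
  obtain ⟨v, rfl⟩ : ∃ v, u = v + 1 := ⟨u-1, by omega⟩
  obtain ⟨p, rfl⟩ : ∃ p, x = p + 1 := ⟨x-1, by omega⟩
  obtain ⟨q, rfl⟩ : ∃ q, y = q + 1 := ⟨y-1, by omega⟩
  obtain ⟨m, rfl⟩ : ∃ m, n = v + 1 + m + 1 := ⟨n - v - 2, by omega⟩
  have e1 : v + 1 + m + 1 - (v + 1 + 1) = m := by omega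
  have e2 : v + 1 + m + 1 - (v + 1) = m + 1 := by omega
  have e3 : v + 1 - 1 = v := by omega
  rw [e1, e2, e3, Nat.choose_succ_succ' v p, Nat.choose_succ_succ' m q]
  have hA : (v.choose p : ℝ) * (m.choose (q+1) : ℝ) ≤ ((v+1+m+1 : ℕ))^(p+1+(q+1)-1) := by
    have h1 : v.choose p ≤ (v+1+m+1)^p :=
      le_trans (Nat.choose_le_choose p (by omega)) (Nat.choose_le_pow _ _)
    have h2 : m.choose (q+1) ≤ (v+1+m+1)^(q+1) :=
      le_trans (Nat.choose_le_choose (q+1) (by omega)) (Nat.choose_le_pow _ _)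
    have := Nat.mul_le_mul h1 h2
    have e : p + 1 + (q+1) - 1 = p + (q+1) := by omega
    rw [e]
    exact_mod_cast this.trans_eq (pow_add _ _ _).symm
  have hB : (v.choose (p+1) : ℝ) * (m.choose q : ℝ) ≤ ((v+1+m+1 : ℕ))^(p+1+(q+1)-1) := by
    have h1 : v.choose (p+1) ≤ (v+1+m+1)^(p+1) :=
      le_trans (Nat.choose_le_choose (p+1) (by omega)) (Nat.choose_le_pow _ _)
    have h2 : m.choose q ≤ (v+1+m+1)^q :=
      le_trans (Nat.choose_le_choose q (by omega)) (Nat.choose_le_pow _ _)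
    have := Nat.mul_le_mul h1 h2
    have e : p + 1 + (q+1) - 1 = (p+1) + q := by omega
    rw [e]
    exact_mod_cast this.trans_eq (pow_add _ _ _).symm
  have hA0 : (0:ℝ) ≤ (v.choose p : ℝ) * (m.choose (q+1) : ℝ) := by positivity
  have hB0 : (0:ℝ) ≤ (v.choose (p+1) : ℝ) * (m.choose q : ℝ) := by positivity
  rw [abs_le]
  push_cast at hA hB ⊢
  constructor <;> nlinarith [hA, hB, hA0, hB0]

lemma dist_bound (n x y : ℕ) (hx : 1 ≤ x) (hy : 1 ≤ y) : ∀ (m u : ℕ), 1 ≤ u → u + m ≤ n →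
    |(((u+m-1).choose x : ℝ) * (((n - (u+m)).choose y : ℝ))) -
      (((u-1).choose x : ℝ) * ((n - u).choose y : ℝ))| ≤ m * (n:ℝ)^(x+y-1) := by
  intro m
  induction m with
  | zero => intro u _ _; simp
  | succ m ih =>
    intro u hu hun
    have h1 := ih u hu (by omega)
    have h2 := step_bound n x y (u+m) hx hy (by omega) (by omega)
    have e1 : u + (m+1) = (u + m) + 1 := by omega
    have e2 : u + m + 1 - 1 = u + m := by omega
    rw [e1, e2]
    calc |((u+m).choose x : ℝ) * ((n - (u+m+1)).choose y : ℝ) -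
          ((u-1).choose x : ℝ) * ((n - u).choose y : ℝ)|
        ≤ |((u+m).choose x : ℝ) * ((n - (u+m+1)).choose y : ℝ) -
            ((u+m-1).choose x : ℝ) * ((n - (u+m)).choose y : ℝ)| +
          |((u+m-1).choose x : ℝ) * ((n - (u+m)).choose y : ℝ) -
            ((u-1).choose x : ℝ) * ((n - u).choose y : ℝ)| := abs_sub_le _ _ _
      _ ≤ (n:ℝ)^(x+y-1) + m * (n:ℝ)^(x+y-1) := by gcongr
      _ = (m+1 : ℕ) * (n:ℝ)^(x+y-1) := by push_cast; ring

lemma close_bound (n x y : ℕ) (hx : 1 ≤ x) (hy : 1 ≤ y) (t t' L : ℕ)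
    (h1 : 1 ≤ t) (h1' : 1 ≤ t') (hn : t ≤ n) (hn' : t' ≤ n)
    (hd : t' ≤ t + L) (hd' : t ≤ t' + L) :
    ((t'-1).choose x : ℝ) * ((n-t').choose y : ℝ)
      ≤ ((t-1).choose x : ℝ) * ((n-t).choose y : ℝ) + L * (n:ℝ)^(x+y-1) := by
  have hD : (0:ℝ) ≤ (n:ℝ)^(x+y-1) := by positivity
  rcases le_total t t' with h | h
  · obtain ⟨m, rfl⟩ : ∃ m, t' = t + m := ⟨t'-t, by omega⟩
    have hb := dist_bound n x y hx hy m t h1 (by omega)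
    have hm : (m:ℝ) ≤ (L:ℝ) := by exact_mod_cast (by omega : m ≤ L)
    rw [abs_le] at hb
    nlinarith [hb.1, hb.2]
  · obtain ⟨m, rfl⟩ : ∃ m, t = t' + m := ⟨t-t', by omega⟩
    have hb := dist_bound n x y hx hy m t' h1' (by omega)
    have hm : (m:ℝ) ≤ (L:ℝ) := by exact_mod_cast (by omega : m ≤ L)
    rw [abs_le] at hb
    nlinarith [hb.1, hb.2]

lemma choose_lower (n K F' : ℕ) (hn : 2*K ≤ n) (hF : (2*K)^K ≤ F') :
    n^K ≤ F' * n.choose K := by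
  calc n^K ≤ (2*(n+1-K))^K := by apply Nat.pow_le_pow_left; omega
    _ = 2^K * (n+1-K)^K := by rw [Nat.mul_pow]
    _ ≤ 2^K * n.descFactorial K := Nat.mul_le_mul_left _ (n.pow_sub_le_descFactorial K)
    _ = 2^K * (K.factorial * n.choose K) := by rw [Nat.descFactorial_eq_factorial_mul_choose]
    _ ≤ 2^K * (K^K * n.choose K) :=
        Nat.mul_le_mul_left _ (Nat.mul_le_mul_right _ (Nat.factorial_le_pow K))
    _ = (2*K)^K * n.choose K := by rw [Nat.mul_pow]; ring
    _ ≤ F' * n.choose K := Nat.mul_le_mul_right _ hF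

/-- For all `α, ε > 0` and `k`, there are `η > 0` and `N` such that for
all `n > N` and every `f : [n] → [0,1]` whose average over every integer interval
`J ⊆ [n]` of length at least `⌊ηn⌋` is within `η` of `α`, one has, for all `x, y ∈ [k]`,
`Σ_{t=⌈ηn⌉}^{⌊(1−η)n⌋} f(t)·C(t−1,x)·C(n−t,y) ≥ (1−ε)·α·C(n, x+y+1)`. -/
theorem binomial_average (a ε : ℝ) (ha : 0 < a) (hε : 0 < ε) (k : ℕ) :
    ∃ η : ℝ, 0 < η ∧ ∃ N : ℕ, ∀ n : ℕ, n > N → ∀ f : ℕ → ℝ,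
      (∀ t ∈ Finset.Icc 1 n, f t ∈ Set.Icc (0 : ℝ) 1) →
      (∀ s t : ℕ, 1 ≤ s → t ≤ n → Nat.floor (η * (n : ℝ)) ≤ (Finset.Icc s t).card →
        |(∑ u ∈ Finset.Icc s t, f u) / ((Finset.Icc s t).card : ℝ) - a| ≤ η) →
      ∀ x ∈ Finset.Icc 1 k, ∀ y ∈ Finset.Icc 1 k,
        (1 - ε) * a * (n.choose (x + y + 1) : ℝ) ≤
          ∑ t ∈ Finset.Icc (Nat.ceil (η * (n : ℝ))) (Nat.floor ((1 - η) * (n : ℝ))),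
            f t * ((t - 1).choose x : ℝ) * ((n - t).choose y : ℝ) := by
  classical
  set F : ℕ := (4*k+2)^(2*k+1) with hFdef
  have hF1 : (1:ℕ) ≤ F := Nat.one_le_pow _ _ (by omega)
  have hFR : (1:ℝ) ≤ (F:ℝ) := by exact_mod_cast hF1
  have hc0 : (0:ℝ) < 24*(F:ℝ)*(1+a)*(1+ε) := by positivity
  refine ⟨ε*a/(24*(F:ℝ)*(1+a)*(1+ε)), by positivity, ?_⟩
  set η : ℝ := ε*a/(24*(F:ℝ)*(1+a)*(1+ε)) with hηdef
  have hη0 : 0 < η := by positivity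
  have hηc : η * (24*(F:ℝ)*(1+a)*(1+ε)) = ε*a := by
    rw [hηdef]; field_simp
  have hp : (0:ℝ) < (1+a)*(1+ε) := by positivity
  have hηF1 : η*(F:ℝ) ≤ ε/24 := by
    nlinarith [mul_pos hε hε, mul_pos (mul_pos ha hε) hε, mul_pos hη0 hε]
  have hηFa : η*(F:ℝ) ≤ ε*a/24 := by
    nlinarith [hp, mul_pos (mul_pos hε ha) ha, mul_pos (mul_pos hε ha) hε,
      mul_pos (mul_pos (mul_pos hε ha) ha) hε]
  have hηa4 : η ≤ ε*a/4 := by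
    nlinarith [mul_le_mul_of_nonneg_left hFR hη0.le, mul_pos (mul_pos ha hε) hη0]
  have hηa : η < a := by
    nlinarith [mul_pos hη0 hε, mul_le_mul_of_nonneg_left hFR hη0.le,
      mul_pos (mul_pos hη0 hε) ha, mul_pos hη0 ha]
  have hη24 : η ≤ 1/24 := by
    nlinarith [mul_pos (mul_pos ha hε) hη0, mul_pos hη0 hε, mul_pos hη0 ha]
  refine ⟨4*k + 2 + Nat.ceil ((4*(F:ℝ))/ε) + Nat.ceil (2/η), ?_⟩
  intro n hn f hf havg x hx y hy
  obtain ⟨hx1, hxk⟩ := Finset.mem_Icc.mp hx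
  obtain ⟨hy1, hyk⟩ := Finset.mem_Icc.mp hy
  have hn4k : 4*k + 2 < n := by omega
  have hn0 : (0:ℝ) < (n:ℝ) := by exact_mod_cast (by omega : 0 < n)
  have hnF : 4*(F:ℝ) ≤ ε*(n:ℝ) := by
    have h1 : ((4*(F:ℝ))/ε) ≤ (n:ℝ) := by
      refine le_trans (Nat.le_ceil _) ?_
      exact_mod_cast Nat.le_of_lt (by omega : Nat.ceil ((4*(F:ℝ))/ε) < n)
    calc 4*(F:ℝ) = ((4*(F:ℝ))/ε)*ε := by field_simp
      _ ≤ (n:ℝ)*ε := mul_le_mul_of_nonneg_right h1 hε.le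
      _ = ε*(n:ℝ) := mul_comm _ _
  have hnη : 2 ≤ η*(n:ℝ) := by
    have h1 : (2/η) ≤ (n:ℝ) := by
      refine le_trans (Nat.le_ceil _) ?_
      exact_mod_cast Nat.le_of_lt (by omega : Nat.ceil (2/η) < n)
    calc (2:ℝ) = (2/η)*η := by field_simp
      _ ≤ (n:ℝ)*η := mul_le_mul_of_nonneg_right h1 hη0.le
      _ = η*(n:ℝ) := mul_comm _ _
  have hηn0 : (0:ℝ) ≤ η*(n:ℝ) := by positivity
  set A := Nat.ceil (η*(n:ℝ)) with hAdef
  set B := Nat.floor ((1-η)*(n:ℝ)) with hBdef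
  set L := Nat.floor (η*(n:ℝ)) with hLdef
  have hL2 : 2 ≤ L := Nat.le_floor (by exact_mod_cast hnη)
  have hL0 : 0 < L := by omega
  have hLr : (L:ℝ) ≤ η*(n:ℝ) := Nat.floor_le hηn0
  have hLpos : (0:ℝ) < (L:ℝ) := by exact_mod_cast hL0
  have hA1 : 1 ≤ A := Nat.ceil_pos.mpr (by positivity)
  have hAr : (A:ℝ) < η*(n:ℝ) + 1 := Nat.ceil_lt_add_one hηn0
  have hnn : (n:ℝ)*η ≤ (n:ℝ)*(1/24) := mul_le_mul_of_nonneg_left hη24 hn0.le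
  have hBr : (1-η)*(n:ℝ) - 1 < (B:ℝ) := by
    have := Nat.lt_floor_add_one ((1-η)*(n:ℝ))
    linarith
  have hBr2 : (B:ℝ) ≤ (1-η)*(n:ℝ) := Nat.floor_le (by nlinarith [hnn, hn0])
  have hBn : B ≤ n := by
    have h1 : (B:ℝ) ≤ (n:ℝ) := by linarith [hBr2, hηn0]
    exact_mod_cast h1
  have hn8 : (7:ℝ) ≤ (n:ℝ) := by exact_mod_cast (by omega : 7 ≤ n)
  have hAB : A ≤ B := by
    have h1 : (A:ℝ) < (B:ℝ) + 1 := by linarith [hAr, hBr, hnn, hn8]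
    have : A < B + 1 := by exact_mod_cast h1
    omega
  -- blocks
  set Q := (B+1-A)/L with hQdef
  obtain ⟨r, hr, hrEq⟩ : ∃ r, r < L ∧ Q*L + r = B+1-A :=
    ⟨(B+1-A)%L, Nat.mod_lt _ hL0, by rw [hQdef, Nat.mul_comm]; exact Nat.div_add_mod _ _⟩
  set qL := Q*L with hqLdef
  have hQL : A + qL ≤ B+1 := by omega
  have hQLn : qL ≤ n := by omega
  -- weights
  set Dr : ℝ := (n:ℝ)^(x+y-1) with hDrdef
  set Mr : ℝ := (n:ℝ)^(x+y) with hMrdef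
  set nK : ℝ := (n:ℝ)^(x+y+1) with hnKdef
  have hDr0 : (0:ℝ) ≤ Dr := by rw [hDrdef]; positivity
  have hMr0 : (0:ℝ) ≤ Mr := by rw [hMrdef]; positivity
  have hMrn : Mr * (n:ℝ) = nK := by rw [hMrdef, hnKdef, ← pow_succ]
  have hDrn : Dr * (n:ℝ) = Mr := by
    rw [hDrdef, hMrdef, ← pow_succ]; congr 1; omega
  set W : ℕ → ℝ := fun t => ((t-1).choose x : ℝ) * ((n-t).choose y : ℝ) with hWdef
  have hW0 : ∀ t, 0 ≤ W t := fun t => by rw [hWdef]; positivity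
  have hWM : ∀ t, t ≤ n → W t ≤ Mr := by
    intro t ht
    have h1 : (t-1).choose x ≤ n^x :=
      le_trans (Nat.choose_le_choose _ (by omega)) (Nat.choose_le_pow _ _)
    have h2 : (n-t).choose y ≤ n^y :=
      le_trans (Nat.choose_le_choose _ (by omega)) (Nat.choose_le_pow _ _)
    have h3 : ((t-1).choose x : ℝ) * ((n-t).choose y : ℝ) ≤ ((n^x : ℕ):ℝ) * ((n^y : ℕ):ℝ) := by
      have c1 : ((t-1).choose x : ℝ) ≤ ((n^x : ℕ):ℝ) := by exact_mod_cast h1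
      have c2 : ((n-t).choose y : ℝ) ≤ ((n^y : ℕ):ℝ) := by exact_mod_cast h2
      exact mul_le_mul c1 c2 (by positivity) (by positivity)
    rw [hWdef, hMrdef]
    calc ((t-1).choose x : ℝ) * ((n-t).choose y : ℝ) ≤ ((n^x : ℕ):ℝ) * ((n^y : ℕ):ℝ) := h3
      _ = (n:ℝ)^(x+y) := by push_cast; rw [pow_add]
  set Cr : ℝ := (n.choose (x+y+1) : ℝ) with hCrdef
  have hCr0 : (0:ℝ) ≤ Cr := by rw [hCrdef]; positivity
  have hCrF : nK ≤ (F:ℝ)*Cr := by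
    have hFK : (2*(x+y+1))^(x+y+1) ≤ F := by
      calc (2*(x+y+1))^(x+y+1) ≤ (4*k+2)^(x+y+1) := Nat.pow_le_pow_left (by omega) _
        _ ≤ (4*k+2)^(2*k+1) := Nat.pow_le_pow_right (by omega) (by omega)
    have := choose_lower n (x+y+1) F (by omega) hFK
    rw [hnKdef, hCrdef]
    exact_mod_cast this
  -- identity
  have hfull : ∑ t ∈ Finset.Ico 1 (n+1), W t = Cr := by
    rw [hCrdef, ← full_sum x y n]
    rw [Nat.cast_sum]
    exact Finset.sum_congr rfl (fun t _ => by rw [hWdef]; push_cast; ring)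
  -- splits
  have hsplit1 : ∑ t ∈ Finset.Ico 1 A, W t + ∑ t ∈ Finset.Ico A (B+1), W t
      + ∑ t ∈ Finset.Ico (B+1) (n+1), W t = Cr := by
    rw [Finset.sum_Ico_consecutive W (by omega : 1 ≤ A) (by omega : A ≤ B+1),
      Finset.sum_Ico_consecutive W (by omega : 1 ≤ B+1) (by omega : B+1 ≤ n+1), hfull]
  have htail1 : ∑ t ∈ Finset.Ico 1 A, W t ≤ ((A:ℝ)-1) * Mr := by
    have h := Finset.sum_le_card_nsmul (Finset.Ico 1 A) W Mr
      (fun t ht => hWM t (by have := Finset.mem_Ico.mp ht; omega))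
    rw [Nat.card_Ico] at h
    calc ∑ t ∈ Finset.Ico 1 A, W t ≤ (A-1 : ℕ) • Mr := h
      _ = ((A-1 : ℕ):ℝ) * Mr := by rw [nsmul_eq_mul]
      _ = ((A:ℝ)-1) * Mr := by
          congr 1; push_cast [hA1]; ring
  have htail2 : ∑ t ∈ Finset.Ico (B+1) (n+1), W t ≤ ((n:ℝ)-(B:ℝ)) * Mr := by
    have h := Finset.sum_le_card_nsmul (Finset.Ico (B+1) (n+1)) W Mr
      (fun t ht => hWM t (by have := Finset.mem_Ico.mp ht; omega))
    rw [Nat.card_Ico] at h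
    calc ∑ t ∈ Finset.Ico (B+1) (n+1), W t ≤ (n+1-(B+1) : ℕ) • Mr := h
      _ = ((n+1-(B+1) : ℕ):ℝ) * Mr := by rw [nsmul_eq_mul]
      _ = ((n:ℝ)-(B:ℝ)) * Mr := by
          congr 1
          have : n+1-(B+1) = n - B := by omega
          rw [this]; push_cast [hBn]; ring
  have hsplit2 : ∑ t ∈ Finset.Ico A (A+qL), W t + ∑ t ∈ Finset.Ico (A+qL) (B+1), W t
      = ∑ t ∈ Finset.Ico A (B+1), W t :=
    Finset.sum_Ico_consecutive W (by omega) hQL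
  have hleftW : ∑ t ∈ Finset.Ico (A+qL) (B+1), W t ≤ (L:ℝ) * Mr := by
    have h := Finset.sum_le_card_nsmul (Finset.Ico (A+qL) (B+1)) W Mr
      (fun t ht => hWM t (by have := Finset.mem_Ico.mp ht; omega))
    rw [Nat.card_Ico] at h
    calc ∑ t ∈ Finset.Ico (A+qL) (B+1), W t ≤ (B+1-(A+qL) : ℕ) • Mr := h
      _ = ((B+1-(A+qL) : ℕ):ℝ) * Mr := by rw [nsmul_eq_mul]
      _ ≤ (L:ℝ) * Mr := by
          apply mul_le_mul_of_nonneg_right _ hMr0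
          exact_mod_cast (by omega : B+1-(A+qL) ≤ L)
  -- per-block bound
  have hblock : ∀ i ∈ range Q,
      (a-η) * (∑ t ∈ Finset.Ico (A+i*L) (A+i*L+L), W t) - (L:ℝ)^2 * Dr
        ≤ ∑ t ∈ Finset.Ico (A+i*L) (A+i*L+L), f t * W t := by
    intro i hi
    have hiQ : i < Q := mem_range.mp hi
    set b := A + i*L with hbdef
    have hiL : i*L + L ≤ qL := by
      rw [hqLdef]
      calc i*L + L = (i+1)*L := by ring
        _ ≤ Q*L := Nat.mul_le_mul_right L (by omega)
    have hbB : b + L ≤ B + 1 := by omega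
    have hb1 : 1 ≤ b := by omega
    have hbn : b + L - 1 ≤ n := by omega
    have hIcc : Finset.Ico b (b+L) = Finset.Icc b (b+L-1) := by
      rw [← Finset.Ico_add_one_right_eq_Icc]; congr 1; omega
    have hcard : (Finset.Icc b (b+L-1)).card = L := by rw [Nat.card_Icc]; omega
    have havgb := havg b (b+L-1) hb1 hbn (le_of_eq hcard.symm)
    rw [hcard] at havgb
    set s_i := ∑ u ∈ Finset.Icc b (b+L-1), f u with hsidef
    have hsi_lb : (a-η)*(L:ℝ) ≤ s_i := by
      have h2 := (abs_le.mp havgb).1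
      have h3 : a - η ≤ s_i/(L:ℝ) := by linarith
      calc (a-η)*(L:ℝ) ≤ (s_i/(L:ℝ))*(L:ℝ) := mul_le_mul_of_nonneg_right h3 hLpos.le
        _ = s_i := by field_simp
    have hsi_ub : s_i ≤ (L:ℝ) := by
      have h := Finset.sum_le_card_nsmul (Finset.Icc b (b+L-1)) f 1
        (fun t ht => by
          have := Finset.mem_Icc.mp ht
          exact (hf t (Finset.mem_Icc.mpr ⟨by omega, by omega⟩)).2)
      rw [hcard, nsmul_eq_mul, mul_one] at h
      exact h
    have hf0b : ∀ t ∈ Finset.Ico b (b+L), 0 ≤ f t := by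
      intro t ht
      have := Finset.mem_Ico.mp ht
      exact (hf t (Finset.mem_Icc.mpr ⟨by omega, by omega⟩)).1
    set Wi := ∑ t ∈ Finset.Ico b (b+L), W t with hWidef
    have hWi0 : 0 ≤ Wi := Finset.sum_nonneg (fun t _ => hW0 t)
    have hWt : ∀ t ∈ Finset.Ico b (b+L), Wi ≤ (L:ℝ) * W t + (L:ℝ)^2 * Dr := by
      intro t ht
      have htm := Finset.mem_Ico.mp ht
      have hat : ∀ t' ∈ Finset.Ico b (b+L), W t' ≤ W t + (L:ℝ)*Dr := by
        intro t' ht'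
        have htm' := Finset.mem_Ico.mp ht'
        rw [hWdef, hDrdef]
        exact close_bound n x y hx1 hy1 t t' L (by omega) (by omega) (by omega) (by omega)
          (by omega) (by omega)
      calc Wi ≤ ∑ _t' ∈ Finset.Ico b (b+L), (W t + (L:ℝ)*Dr) := Finset.sum_le_sum hat
        _ = (L:ℝ) * W t + (L:ℝ)^2 * Dr := by
            rw [Finset.sum_const, Nat.card_Ico, nsmul_eq_mul]
            have : (b + L - b : ℕ) = L := by omega
            rw [this]; ring
    have key : (L:ℝ) * (∑ t ∈ Finset.Ico b (b+L), f t * W t)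
        ≥ (L:ℝ) * ((a-η)*Wi - (L:ℝ)^2*Dr) := by
      have step1 : ∑ t ∈ Finset.Ico b (b+L), f t * (Wi - (L:ℝ)^2*Dr)
          ≤ ∑ t ∈ Finset.Ico b (b+L), (L:ℝ) * (f t * W t) := by
        apply Finset.sum_le_sum
        intro t ht
        have h1 := hWt t ht
        have h2 := hf0b t ht
        have h3 := mul_le_mul_of_nonneg_left
          (show Wi - (L:ℝ)^2*Dr ≤ (L:ℝ)*W t by linarith only [h1]) h2
        linarith only [h3]
      have step2 : ∑ t ∈ Finset.Ico b (b+L), f t * (Wi - (L:ℝ)^2*Dr)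
          = s_i * (Wi - (L:ℝ)^2*Dr) := by
        rw [← Finset.sum_mul, hsidef, hIcc]
      have step3 : (a-η)*(L:ℝ)*Wi - (L:ℝ)*((L:ℝ)^2*Dr) ≤ s_i * (Wi - (L:ℝ)^2*Dr) := by
        have hLD : 0 ≤ (L:ℝ)^2*Dr := by positivity
        have p1 := mul_le_mul_of_nonneg_right hsi_lb hWi0
        have p2 := mul_le_mul_of_nonneg_right hsi_ub hLD
        linarith only [p1, p2]
      calc (L:ℝ) * ((a-η)*Wi - (L:ℝ)^2*Dr) = (a-η)*(L:ℝ)*Wi - (L:ℝ)*((L:ℝ)^2*Dr) := by ring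
        _ ≤ s_i * (Wi - (L:ℝ)^2*Dr) := step3
        _ = ∑ t ∈ Finset.Ico b (b+L), f t * (Wi - (L:ℝ)^2*Dr) := step2.symm
        _ ≤ ∑ t ∈ Finset.Ico b (b+L), (L:ℝ) * (f t * W t) := step1
        _ = (L:ℝ) * ∑ t ∈ Finset.Ico b (b+L), f t * W t := by rw [Finset.mul_sum]
    have := (mul_le_mul_iff_right₀ hLpos).mp key
    linarith [this]
  -- sum over blocks
  have hcov : (a-η) * (∑ t ∈ Finset.Ico A (A+qL), W t) - (Q:ℝ)*(L:ℝ)^2*Dr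
      ≤ ∑ t ∈ Finset.Ico A (A+qL), f t * W t := by
    rw [hqLdef, block_sum (fun t => f t * W t) A L Q, block_sum W A L Q]
    have expand : (a-η) * (∑ i ∈ range Q, ∑ t ∈ Finset.Ico (A+i*L) (A+i*L+L), W t)
        - (Q:ℝ)*(L:ℝ)^2*Dr
        = ∑ i ∈ range Q, ((a-η) * (∑ t ∈ Finset.Ico (A+i*L) (A+i*L+L), W t) - (L:ℝ)^2*Dr) := by
      rw [Finset.sum_sub_distrib, ← Finset.mul_sum, Finset.sum_const, Finset.card_range,
        nsmul_eq_mul]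
      ring
    rw [expand]
    exact Finset.sum_le_sum hblock
  -- monotonicity
  have hmono : ∑ t ∈ Finset.Ico A (A+qL), f t * W t ≤ ∑ t ∈ Finset.Ico A (B+1), f t * W t := by
    apply Finset.sum_le_sum_of_subset_of_nonneg (Finset.Ico_subset_Ico_right (by omega))
    intro t ht _
    have := Finset.mem_Ico.mp ht
    exact mul_nonneg ((hf t (Finset.mem_Icc.mpr ⟨by omega, by omega⟩)).1) (hW0 t)
  -- rewrite goal
  rw [show Finset.Icc A B = Finset.Ico A (B+1) from by rw [Finset.Ico_add_one_right_eq_Icc]]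
  have hgoalsum : ∑ t ∈ Finset.Ico A (B+1), f t * ((t-1).choose x : ℝ) * ((n-t).choose y : ℝ)
      = ∑ t ∈ Finset.Ico A (B+1), f t * W t :=
    Finset.sum_congr rfl (fun t _ => by rw [hWdef]; ring)
  rw [hgoalsum]
  -- final numeric assembly
  set S := ∑ t ∈ Finset.Ico A (B+1), f t * W t with hSdef
  set WR := ∑ t ∈ Finset.Ico A (B+1), W t with hWRdef
  set Wc := ∑ t ∈ Finset.Ico A (A+qL), W t with hWcdef
  have hWc0 : 0 ≤ Wc := Finset.sum_nonneg (fun t _ => hW0 t)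
  have hQLD : (Q:ℝ)*(L:ℝ)^2*Dr ≤ η*nK := by
    have h1 : (Q:ℝ)*(L:ℝ) ≤ (n:ℝ) := by
      have : Q*L ≤ n := by omega
      exact_mod_cast this
    have h2 : (Q:ℝ)*(L:ℝ)^2*Dr = ((Q:ℝ)*(L:ℝ))*((L:ℝ)*Dr) := by ring
    have h3 : (L:ℝ)*Dr ≤ (η*(n:ℝ))*Dr := mul_le_mul_of_nonneg_right hLr hDr0
    have h4 : (0:ℝ) ≤ (Q:ℝ)*(L:ℝ) := by positivity
    calc (Q:ℝ)*(L:ℝ)^2*Dr = ((Q:ℝ)*(L:ℝ))*((L:ℝ)*Dr) := h2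
      _ ≤ (n:ℝ)*((η*(n:ℝ))*Dr) := by
          apply mul_le_mul h1 h3 (by positivity) hn0.le
      _ = η*(Dr*(n:ℝ)*(n:ℝ)) := by ring
      _ = η*nK := by rw [hDrn, hMrn]
  have hS1 : (a-η)*Wc - η*nK ≤ S := by
    linarith only [hcov, hmono, hQLD]
  have hWcX : Cr - (3*(η*(n:ℝ))+1)*Mr ≤ Wc := by
    have t1 : ∑ t ∈ Finset.Ico 1 A, W t ≤ (η*(n:ℝ))*Mr := by
      refine le_trans htail1 (mul_le_mul_of_nonneg_right (by linarith) hMr0)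
    have t2 : ∑ t ∈ Finset.Ico (B+1) (n+1), W t ≤ (η*(n:ℝ)+1)*Mr := by
      refine le_trans htail2 (mul_le_mul_of_nonneg_right (by linarith) hMr0)
    have t3 : ∑ t ∈ Finset.Ico (A+qL) (B+1), W t ≤ (η*(n:ℝ))*Mr := by
      refine le_trans hleftW (mul_le_mul_of_nonneg_right hLr hMr0)
    linarith only [t1, t2, t3, hsplit1, hsplit2]
  have hmul : (a-η)*(Cr - (3*(η*(n:ℝ))+1)*Mr) ≤ (a-η)*Wc :=
    mul_le_mul_of_nonneg_left hWcX (by linarith)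
  -- junk bounds
  have hMrCr : 4*Mr ≤ ε*Cr := by
    have h1 : 4*(Mr*(n:ℝ)) = 4*nK := by rw [hMrn]
    have h2 : 4*nK ≤ 4*((F:ℝ)*Cr) := by linarith [hCrF]
    have h3 : 4*((F:ℝ)*Cr) = (4*(F:ℝ))*Cr := by ring
    have h4 : (4*(F:ℝ))*Cr ≤ (ε*(n:ℝ))*Cr := mul_le_mul_of_nonneg_right hnF hCr0
    have h5 : 4*(Mr*(n:ℝ)) ≤ (ε*(n:ℝ))*Cr := by linarith only [h1, h2, h3, h4]
    have h6 : (4*Mr)*(n:ℝ) ≤ (ε*Cr)*(n:ℝ) := by linarith only [h5]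
    exact le_of_mul_le_mul_right h6 hn0
  have hηnK : η*nK ≤ (ε*a/24)*Cr := by
    have h1 : η*nK ≤ η*((F:ℝ)*Cr) := mul_le_mul_of_nonneg_left hCrF hη0.le
    have h2 : η*((F:ℝ)*Cr) = (η*(F:ℝ))*Cr := by ring
    have h3 : (η*(F:ℝ))*Cr ≤ (ε*a/24)*Cr := mul_le_mul_of_nonneg_right hηFa hCr0
    linarith
  have hηCr : η*Cr ≤ (ε*a/4)*Cr := mul_le_mul_of_nonneg_right hηa4 hCr0
  have hηnMr : η*(n:ℝ)*Mr = η*nK := by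
    rw [← hMrn]; ring
  have h3a : 3*a*(η*(n:ℝ)*Mr) ≤ (ε*a/8)*Cr := by
    rw [hηnMr]
    have h1 : η*nK ≤ (η*(F:ℝ))*Cr := by
      have := mul_le_mul_of_nonneg_left hCrF hη0.le
      linarith [this]
    have h2 : (η*(F:ℝ))*Cr ≤ (ε/24)*Cr := mul_le_mul_of_nonneg_right hηF1 hCr0
    have h7 : η*nK ≤ (ε/24)*Cr := le_trans h1 h2
    have h8 := mul_le_mul_of_nonneg_left h7 (by positivity : (0:ℝ) ≤ 3*a)
    linarith only [h8]
  have hexp : (a-η)*(Cr - (3*(η*(n:ℝ))+1)*Mr)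
      = a*Cr - η*Cr - (a-η)*(3*(η*(n:ℝ))*Mr + Mr) := by ring
  have hbig : (a-η)*(3*(η*(n:ℝ))*Mr + Mr) ≤ 3*a*(η*(n:ℝ)*Mr) + a*Mr := by
    have q1 : 0 ≤ η*((η*(n:ℝ))*Mr) := mul_nonneg hη0.le (mul_nonneg hηn0 hMr0)
    have q2 : 0 ≤ η*Mr := mul_nonneg hη0.le hMr0
    linarith only [q1, q2]
  have haMr : a*Mr ≤ a*((ε/4)*Cr) := by
    apply mul_le_mul_of_nonneg_left _ ha.le
    linarith [hMrCr]
  -- conclude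
  have final : (1-ε)*a*Cr ≤ S := by
    have e1 : a*((ε/4)*Cr) = (ε*a/4)*Cr := by ring
    rw [e1] at haMr
    have hεaCr : 0 ≤ ε*a*Cr := mul_nonneg (mul_pos hε ha).le hCr0
    linarith only [hS1, hmul, hηnK, hηCr, h3a, haMr, hbig, hεaCr]
  exact final
end

section
/- Let H be a finite graph on vertex set {1, 2, …, h} and let λ ∈ (0,1). There exists η₀ > 0 such that for every η with 0 < η ≤ η₀ there exists n₀ ∈ ℕ with the following property: if G is a graph and V_1, …, V_h are pairwise disjoint vertex sets in G, each of size at least n₀, such that the pair (V_i, V_j) is η-regular with density at least λ for every edge ij of H, then there exist vertices v_1 ∈ V_1, …, v_h ∈ V_h such that v_i v_j is an edge of G for every edge ij of H. -/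
/-- `e(X, Y)`: the number of edges of `G` with one endpoint in `X` and the other in `Y`
(for disjoint `X` and `Y`). -/
noncomputable def edgesBetween {V : Type*} (G : SimpleGraph V) (X Y : Finset V) : ℕ :=
  {p : V × V | p.1 ∈ X ∧ p.2 ∈ Y ∧ G.Adj p.1 p.2}.ncard

/-- The density `d(X, Y) = e(X,Y)/(|X|·|Y|)` between disjoint vertex sets. -/
noncomputable def dens {V : Type*} (G : SimpleGraph V) (X Y : Finset V) : ℝ :=
  (edgesBetween G X Y : ℝ) / ((X.card : ℝ) * (Y.card : ℝ))

/-- The pair `(A, B)` is `η`-regular: for all `X ⊆ A` and `Y ⊆ B` with `|X| ≥ η|A|` and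
`|Y| ≥ η|B|` one has `|d(X,Y) − d(A,B)| ≤ η`. -/
def IsRegularPair {V : Type*} (G : SimpleGraph V) (η : ℝ) (A B : Finset V) : Prop :=
  ∀ X ⊆ A, ∀ Y ⊆ B, η * (A.card : ℝ) ≤ (X.card : ℝ) → η * (B.card : ℝ) ≤ (Y.card : ℝ) →
    |dens G X Y - dens G A B| ≤ η

/-- A partition is `η`-regular if all but at most `η·C(t,2)` of the (unordered) pairs of
distinct parts are `η`-regular; here counted as ordered pairs, hence the factor `2`. -/
def IsRegularPartition {V : Type*} [DecidableEq V] [Fintype V] (G : SimpleGraph V) (η : ℝ)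
    (P : Finpartition (Finset.univ : Finset V)) : Prop :=
  ({pq : Finset V × Finset V | pq.1 ∈ P.parts ∧ pq.2 ∈ P.parts ∧ pq.1 ≠ pq.2 ∧
      ¬ IsRegularPair G η pq.1 pq.2}.ncard : ℝ) ≤ 2 * (η * (P.parts.card.choose 2 : ℝ))

open Finset

lemma edgesBetween_eq_sum {V : Type*} [DecidableEq V] (G : SimpleGraph V) [DecidableRel G.Adj]
    (X Y : Finset V) :
    edgesBetween G X Y = ∑ a ∈ X, #{y ∈ Y | G.Adj a y} := by
  have h1 : {p : V × V | p.1 ∈ X ∧ p.2 ∈ Y ∧ G.Adj p.1 p.2}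
      = ↑(Rel.interedges G.Adj X Y) := by
    ext ⟨a, b⟩
    simp [Rel.mem_interedges_iff]
  rw [edgesBetween, h1, Set.ncard_coe_finset, Rel.interedges_eq_biUnion, card_biUnion]
  · simp
  · intro x hx y hy hxy
    rw [Function.onFun, Finset.disjoint_left]
    rintro ⟨p, q⟩ hp hq
    simp only [mem_map, Function.Embedding.coeFn_mk, Prod.mk.injEq] at hp hq
    obtain ⟨b, -, rfl, -⟩ := hp
    obtain ⟨b', -, rfl, -⟩ := hq
    exact hxy rfl

lemma few_bad {V : Type*} [DecidableEq V] (G : SimpleGraph V) [DecidableRel G.Adj]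
    {η : ℝ} {A B Y : Finset V} (hreg : IsRegularPair G η A B) (hY : Y ⊆ B)
    (hη : 0 < η) (hA : 0 < A.card) (hB : 0 < B.card)
    (hYc : η * (B.card : ℝ) ≤ (Y.card : ℝ)) :
    ((#{a ∈ A | ((#{y ∈ Y | G.Adj a y} : ℕ) : ℝ) < (dens G A B - η) * (Y.card : ℝ)} : ℕ) : ℝ)
      < η * A.card := by
  by_contra hc
  push_neg at hc
  set Bad := {a ∈ A | ((#{y ∈ Y | G.Adj a y} : ℕ) : ℝ) < (dens G A B - η) * (Y.card : ℝ)}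
    with hBdef
  have hBadA : Bad ⊆ A := filter_subset _ _
  have hbound := hreg Bad hBadA Y hY hc hYc
  have hApos : (0:ℝ) < A.card := by exact_mod_cast hA
  have hBpos : (0:ℝ) < B.card := by exact_mod_cast hB
  have hBadpos : (0:ℝ) < Bad.card := lt_of_lt_of_le (by positivity) hc
  have hBadne : Bad.Nonempty := card_pos.mp (by exact_mod_cast hBadpos)
  have hYpos : (0:ℝ) < (Y.card : ℝ) := lt_of_lt_of_le (by positivity) hYc
  have hsum : (edgesBetween G Bad Y : ℝ)
      < (Bad.card : ℝ) * ((dens G A B - η) * (Y.card : ℝ)) := by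
    rw [edgesBetween_eq_sum]
    push_cast
    calc ∑ a ∈ Bad, ((#{y ∈ Y | G.Adj a y} : ℕ) : ℝ)
        < ∑ _a ∈ Bad, (dens G A B - η) * (Y.card : ℝ) :=
          Finset.sum_lt_sum_of_nonempty hBadne (fun a ha => (mem_filter.mp ha).2)
      _ = (Bad.card : ℝ) * ((dens G A B - η) * (Y.card : ℝ)) := by
          rw [Finset.sum_const, nsmul_eq_mul]
  have hdlt : dens G Bad Y < dens G A B - η := by
    rw [show _root_.dens G Bad Y = (edgesBetween G Bad Y : ℝ) / ((Bad.card : ℝ) * (Y.card : ℝ)) from rfl, div_lt_iff₀ (by positivity)]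
    calc (edgesBetween G Bad Y : ℝ)
        < (Bad.card : ℝ) * ((dens G A B - η) * (Y.card : ℝ)) := hsum
      _ = (dens G A B - η) * ((Bad.card : ℝ) * (Y.card : ℝ)) := by ring
  have := abs_le.mp hbound
  linarith [this.1]


set_option maxHeartbeats 2000000 in
/-- graph building lemma. Let `H` be a graph on `{1, …, h}` and
`λ ∈ (0,1)`. There is `η₀ > 0` such that for every `0 < η ≤ η₀` there is `n₀` with: whenever
`V_1, …, V_h` are pairwise disjoint vertex sets in a graph `G`, each of size at least `n₀`,
such that `(V_i, V_j)` is `η`-regular with density at least `λ` for every edge `ij` of `H`,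
there are vertices `v_i ∈ V_i` forming a copy of `H` in `G`. -/
theorem graph_building
    (h : ℕ) (H : SimpleGraph (Fin h)) (lam : ℝ) (hlam0 : 0 < lam) (hlam1 : lam < 1) :
    ∃ η₀ : ℝ, 0 < η₀ ∧ ∀ η : ℝ, 0 < η → η ≤ η₀ →
      ∃ n₀ : ℕ, ∀ (V : Type) [Fintype V] [DecidableEq V] (G : SimpleGraph V)
        (Vs : Fin h → Finset V),
        (∀ i j, i ≠ j → Disjoint (Vs i) (Vs j)) →
        (∀ i, n₀ ≤ (Vs i).card) →
        (∀ i j, H.Adj i j → IsRegularPair G η (Vs i) (Vs j) ∧ lam ≤ dens G (Vs i) (Vs j)) →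
        ∃ v : Fin h → V, (∀ i, v i ∈ Vs i) ∧ ∀ i j, H.Adj i j → G.Adj (v i) (v j) := by
  classical
  have hl2 : (0:ℝ) < lam / 2 := by linarith
  have hl2' : lam / 2 < 1 := by linarith
  have hη₀pos : (0:ℝ) < (lam/2)^(h+1) / ((h:ℝ)+1) := div_pos (pow_pos hl2 _) (by positivity)
  refine ⟨(lam/2)^(h+1) / ((h:ℝ)+1), hη₀pos, fun η hη hηle => ⟨1, ?_⟩⟩
  intro V _ _ G Vs hdisj hcard hreg
  have hh1 : (1:ℝ) ≤ (h:ℝ) + 1 := by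
    have : (0:ℝ) ≤ (h:ℝ) := Nat.cast_nonneg h
    linarith
  have hηle' : η ≤ (lam/2)^(h+1) := by
    refine hηle.trans ?_
    rw [div_le_iff₀ (by positivity)]
    nlinarith [pow_pos hl2 (h+1)]
  have hpowh : (lam/2)^(h+1) ≤ (lam/2)^h := by
    calc (lam/2)^(h+1) = (lam/2)^h * (lam/2) := by ring
      _ ≤ (lam/2)^h * 1 := by nlinarith [pow_pos hl2 h]
      _ = (lam/2)^h := by ring
  have hηlam : η ≤ lam / 2 := by
    refine hηle'.trans ?_
    calc (lam/2)^(h+1) ≤ (lam/2)^1 :=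
          pow_le_pow_of_le_one hl2.le hl2'.le (by omega)
      _ = lam/2 := pow_one _
  set β : ℝ := lam - η with hβdef
  have hβpos : 0 < β := by simp only [hβdef]; linarith
  have hβ2 : lam/2 ≤ β := by simp only [hβdef]; linarith
  have hβ1 : β ≤ 1 := by simp only [hβdef]; linarith
  have hβh : (lam/2)^h ≤ β^h := pow_le_pow_left₀ hl2.le hβ2 h
  have key1 : η ≤ β^h := hηle'.trans (hpowh.trans hβh)
  have key2 : (h:ℝ) * η < β^h := by
    have h1 : (h:ℝ) * η ≤ (h:ℝ) * ((lam/2)^(h+1) / (h+1)) :=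
      mul_le_mul_of_nonneg_left hηle (Nat.cast_nonneg h)
    have h2 : (h:ℝ) * ((lam/2)^(h+1) / (h+1)) < (lam/2)^(h+1) := by
      rw [mul_div_assoc', div_lt_iff₀ (by positivity)]
      nlinarith [pow_pos hl2 (h+1)]
    linarith [hpowh.trans hβh]
  have hVpos : ∀ i, (0:ℝ) < ((Vs i).card : ℝ) := by
    intro i
    have := hcard i
    exact_mod_cast Nat.lt_of_lt_of_le Nat.zero_lt_one this
  -- the invariant
  have claim : ∀ k : ℕ, k ≤ h → ∃ (v : Fin h → V) (C : Fin h → Finset V),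
      (∀ i : Fin h, (i:ℕ) < k → v i ∈ Vs i) ∧
      (∀ i j : Fin h, (i:ℕ) < k → (j:ℕ) < k → H.Adj i j → G.Adj (v i) (v j)) ∧
      ∀ j : Fin h, k ≤ (j:ℕ) →
        C j ⊆ Vs j ∧
        β ^ (#{i : Fin h | (i:ℕ) < k ∧ H.Adj i j}) * ((Vs j).card : ℝ) ≤ ((C j).card : ℝ) ∧
        (∀ i : Fin h, (i:ℕ) < k → H.Adj i j → ∀ x ∈ C j, G.Adj (v i) x) := by
    intro k
    induction k with
    | zero =>
      intro _
      refine ⟨fun i => (card_pos.mp (Nat.lt_of_lt_of_le Nat.zero_lt_one (hcard i))).choose,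
        Vs, by omega, by omega, fun j _ => ⟨subset_rfl, ?_, by omega⟩⟩
      have : (filter (fun i : Fin h => (i:ℕ) < 0 ∧ H.Adj i j) univ) = (∅ : Finset (Fin h)) := by
        ext i; simp
      rw [show #{i : Fin h | (i:ℕ) < 0 ∧ H.Adj i j} = #(∅ : Finset (Fin h)) from by rw [this]]
      simp
    | succ k ih =>
      intro hk1
      obtain ⟨v, C, h1, h2, h3⟩ := ih (Nat.le_of_succ_le hk1)
      set i₀ : Fin h := ⟨k, hk1⟩ with hi₀def
      have hi₀v : (i₀ : ℕ) = k := rfl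
      obtain ⟨hC0sub, hC0card, hC0adj⟩ := h3 i₀ (le_of_eq hi₀v.symm)
      have hexp : ∀ j : Fin h, β ^ h ≤ β ^ (#{i : Fin h | (i:ℕ) < k ∧ H.Adj i j}) := by
        intro j
        refine pow_le_pow_of_le_one hβpos.le hβ1 ?_
        calc #{i : Fin h | (i:ℕ) < k ∧ H.Adj i j} ≤ #(univ : Finset (Fin h)) :=
              card_le_card (subset_univ _)
          _ = h := by simp
      have hCcard : ∀ j : Fin h, k ≤ (j:ℕ) → β ^ h * ((Vs j).card : ℝ) ≤ ((C j).card : ℝ) := by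
        intro j hj
        exact le_trans (mul_le_mul_of_nonneg_right (hexp j) (hVpos j).le) (h3 j hj).2.1
      have hCη : ∀ j : Fin h, k ≤ (j:ℕ) → η * ((Vs j).card : ℝ) ≤ ((C j).card : ℝ) := by
        intro j hj
        exact le_trans (mul_le_mul_of_nonneg_right key1 (hVpos j).le) (hCcard j hj)
      set S : Finset (Fin h) := {j : Fin h | k < (j:ℕ) ∧ H.Adj i₀ j} with hSdef
      set Bad : Fin h → Finset V := fun j =>
        {a ∈ C i₀ | ((#{y ∈ C j | G.Adj a y} : ℕ) : ℝ)
          < (dens G (Vs i₀) (Vs j) - η) * (((C j).card : ℕ) : ℝ)} with hBaddef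
      have hBadcard : ∀ j ∈ S, ((Bad j).card : ℝ) ≤ η * ((Vs i₀).card : ℝ) := by
        intro j hj
        rw [hSdef, mem_filter] at hj
        obtain ⟨-, hjk, hadj⟩ := hj
        have hVi0 : 0 < (Vs i₀).card := by exact_mod_cast hVpos i₀
        have hVj : 0 < (Vs j).card := by exact_mod_cast hVpos j
        have hfb := few_bad G (hreg i₀ j hadj).1 ((h3 j hjk.le).1) hη hVi0 hVj (hCη j hjk.le)
        have hsub : Bad j ⊆ {a ∈ Vs i₀ | ((#{y ∈ C j | G.Adj a y} : ℕ) : ℝ)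
            < (dens G (Vs i₀) (Vs j) - η) * (((C j).card : ℕ) : ℝ)} := by
          intro a ha
          rw [hBaddef, mem_filter] at ha
          exact mem_filter.mpr ⟨hC0sub ha.1, ha.2⟩
        calc ((Bad j).card : ℝ) ≤ _ := by exact_mod_cast card_le_card hsub
          _ ≤ η * ((Vs i₀).card : ℝ) := hfb.le
      set T : Finset V := S.biUnion Bad with hTdef
      have hTcard : (T.card : ℝ) ≤ (h:ℝ) * (η * ((Vs i₀).card : ℝ)) := by
        have h1' : (T.card : ℝ) ≤ ∑ j ∈ S, ((Bad j).card : ℝ) := by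
          exact_mod_cast card_biUnion_le
        have h2' : ∑ j ∈ S, ((Bad j).card : ℝ) ≤ ∑ _j ∈ S, η * ((Vs i₀).card : ℝ) :=
          Finset.sum_le_sum hBadcard
        have h3' : (S.card : ℝ) ≤ (h:ℝ) := by
          have : S.card ≤ h := le_trans (card_le_card (subset_univ _)) (by simp)
          exact_mod_cast this
        have h4' : (0:ℝ) ≤ η * ((Vs i₀).card : ℝ) := by positivity
        calc (T.card : ℝ) ≤ ∑ _j ∈ S, η * ((Vs i₀).card : ℝ) := h1'.trans h2'
          _ = (S.card : ℝ) * (η * ((Vs i₀).card : ℝ)) := by rw [sum_const, nsmul_eq_mul]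
          _ ≤ (h:ℝ) * (η * ((Vs i₀).card : ℝ)) := mul_le_mul_of_nonneg_right h3' h4'
      have hGd : (0:ℝ) < ((C i₀ \ T).card : ℝ) := by
        have hs : (C i₀).card ≤ (C i₀ \ T).card + T.card := card_le_card_sdiff_add_card
        have hs' : ((C i₀).card : ℝ) ≤ ((C i₀ \ T).card : ℝ) + (T.card : ℝ) := by
          exact_mod_cast hs
        have hb : β ^ h * ((Vs i₀).card : ℝ) ≤ ((C i₀).card : ℝ) := hCcard i₀ (le_of_eq hi₀v.symm)
        have hkey : (h:ℝ) * η * ((Vs i₀).card : ℝ) < β ^ h * ((Vs i₀).card : ℝ) :=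
          mul_lt_mul_of_pos_right key2 (hVpos i₀)
        nlinarith [hVpos i₀]
      obtain ⟨a, ha⟩ := card_pos.mp (by exact_mod_cast hGd)
      obtain ⟨haC, haT⟩ := mem_sdiff.mp ha
      have hgood : ∀ j : Fin h, k < (j:ℕ) → H.Adj i₀ j →
          (dens G (Vs i₀) (Vs j) - η) * (((C j).card : ℕ) : ℝ)
            ≤ ((#{y ∈ C j | G.Adj a y} : ℕ) : ℝ) := by
        intro j hjk hadj
        have hjS : j ∈ S := by rw [hSdef, mem_filter]; exact ⟨mem_univ _, hjk, hadj⟩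
        have : a ∉ Bad j := fun hmem => haT (mem_biUnion.mpr ⟨j, hjS, hmem⟩)
        rw [hBaddef, mem_filter, not_and] at this
        exact not_lt.mp (this haC)
      refine ⟨Function.update v i₀ a,
        fun j => if k < (j:ℕ) ∧ H.Adj i₀ j then {y ∈ C j | G.Adj a y} else C j, ?_, ?_, ?_⟩
      · intro i hi
        rcases Nat.lt_succ_iff_lt_or_eq.mp hi with hi' | hi'
        · rw [Function.update_of_ne (fun he => by rw [he] at hi'; exact absurd hi' (by omega))]
          exact h1 i hi'
        · have : i = i₀ := Fin.ext hi'
          rw [this, Function.update_self]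
          exact hC0sub haC
      · intro i j hi hj hadj
        rcases Nat.lt_succ_iff_lt_or_eq.mp hi with hi' | hi' <;>
          rcases Nat.lt_succ_iff_lt_or_eq.mp hj with hj' | hj'
        · rw [Function.update_of_ne (fun he => by rw [he] at hi'; exact absurd hi' (by omega)),
            Function.update_of_ne (fun he => by rw [he] at hj'; exact absurd hj' (by omega))]
          exact h2 i j hi' hj' hadj
        · have hji : j = i₀ := Fin.ext hj'
          rw [hji, Function.update_self,
            Function.update_of_ne (fun he => by rw [he] at hi'; exact absurd hi' (by omega))]
          exact hC0adj i hi' (hji ▸ hadj) a haC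
        · have hii : i = i₀ := Fin.ext hi'
          rw [hii, Function.update_self,
            Function.update_of_ne (fun he => by rw [he] at hj'; exact absurd hj' (by omega))]
          exact (hC0adj j hj' (H.adj_symm (hii ▸ hadj)) a haC).symm
        · exfalso
          have : i = j := Fin.ext (hi'.trans hj'.symm)
          exact H.loopless.irrefl i (this ▸ hadj)
      · intro j hj
        beta_reduce
        have hjk : k ≤ (j:ℕ) := by omega
        have hjk' : k < (j:ℕ) := by omega
        obtain ⟨hsub, hcardb, hadjb⟩ := h3 j hjk
        by_cases hA : H.Adj i₀ j
        · have hC'j : (if k < (j:ℕ) ∧ H.Adj i₀ j then {y ∈ C j | G.Adj a y} else C j)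
              = {y ∈ C j | G.Adj a y} := if_pos ⟨hjk', hA⟩
          rw [hC'j]
          have hfilins : (filter (fun i : Fin h => (i:ℕ) < k + 1 ∧ H.Adj i j) univ)
              = insert i₀ (filter (fun i : Fin h => (i:ℕ) < k ∧ H.Adj i j) univ) := by
            ext i
            simp only [mem_filter, mem_univ, true_and, mem_insert]
            constructor
            · rintro ⟨hlt, hadj⟩
              rcases Nat.lt_succ_iff_lt_or_eq.mp hlt with h' | h'
              · exact Or.inr ⟨h', hadj⟩
              · exact Or.inl (Fin.ext h')
            · rintro (rfl | ⟨hlt, hadj⟩)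
              · exact ⟨by omega, hA⟩
              · exact ⟨by omega, hadj⟩
          have hnotmem : i₀ ∉ (filter (fun i : Fin h => (i:ℕ) < k ∧ H.Adj i j) univ) := by
            simp [hi₀v]
          refine ⟨(filter_subset _ _).trans hsub, ?_, ?_⟩
          · rw [hfilins, card_insert_of_notMem hnotmem, pow_succ]
            have hd : lam ≤ dens G (Vs i₀) (Vs j) := (hreg i₀ j hA).2
            have hCj0 : (0:ℝ) ≤ ((C j).card : ℝ) := Nat.cast_nonneg _
            calc β ^ (#{i : Fin h | (i:ℕ) < k ∧ H.Adj i j}) * β * ((Vs j).card : ℝ)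
                = β * (β ^ (#{i : Fin h | (i:ℕ) < k ∧ H.Adj i j}) * ((Vs j).card : ℝ)) := by
                  ring
              _ ≤ β * ((C j).card : ℝ) := mul_le_mul_of_nonneg_left hcardb hβpos.le
              _ ≤ (dens G (Vs i₀) (Vs j) - η) * ((C j).card : ℝ) := by
                  have : β ≤ dens G (Vs i₀) (Vs j) - η := by simp only [hβdef]; linarith
                  exact mul_le_mul_of_nonneg_right this hCj0
              _ ≤ ((#{y ∈ C j | G.Adj a y} : ℕ) : ℝ) := hgood j hjk' hA
          · intro i hi hadj x hx
            obtain ⟨hxC, hxa⟩ := mem_filter.mp hx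
            rcases Nat.lt_succ_iff_lt_or_eq.mp hi with hi' | hi'
            · rw [Function.update_of_ne
                (fun he => by rw [he] at hi'; exact absurd hi' (by omega))]
              exact hadjb i hi' hadj x hxC
            · have : i = i₀ := Fin.ext hi'
              rw [this, Function.update_self]
              exact hxa
        · have hC'j : (if k < (j:ℕ) ∧ H.Adj i₀ j then {y ∈ C j | G.Adj a y} else C j)
              = C j := if_neg (fun hc => hA hc.2)
          rw [hC'j]
          have hfileq : (filter (fun i : Fin h => (i:ℕ) < k + 1 ∧ H.Adj i j) univ)
              = (filter (fun i : Fin h => (i:ℕ) < k ∧ H.Adj i j) univ) := by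
            ext i
            simp only [mem_filter, mem_univ, true_and]
            constructor
            · rintro ⟨hlt, hadj⟩
              rcases Nat.lt_succ_iff_lt_or_eq.mp hlt with h' | h'
              · exact ⟨h', hadj⟩
              · exact absurd hadj (by rw [show i = i₀ from Fin.ext h']; exact hA)
            · rintro ⟨hlt, hadj⟩
              exact ⟨by omega, hadj⟩
          refine ⟨hsub, by rw [hfileq]; exact hcardb, ?_⟩
          intro i hi hadj x hx
          rcases Nat.lt_succ_iff_lt_or_eq.mp hi with hi' | hi'
          · rw [Function.update_of_ne (fun he => by rw [he] at hi'; exact absurd hi' (by omega))]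
            exact hadjb i hi' hadj x hx
          · exact absurd hadj (by rw [show i = i₀ from Fin.ext hi']; exact hA)
  obtain ⟨v, C, h1, h2, -⟩ := claim h le_rfl
  exact ⟨v, fun i => h1 i i.isLt, fun i j hadj => h2 i j i.isLt j.isLt hadj⟩
end
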